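/- arXiv:2112.02765 — 2 statements merged into one kernel-verified Lean document; each statement's English description precedes it below -/
import Mathlib

section
/- Let h : I → ℝ be a map on a compact interval I with positive derivative. If h is C^{1+α} smooth (0 < α ≤ 1), then there is a constant C such that |ξ_h(J)| ≤ C·|J|^α for every closed interval J ⊆ I. Moreover, if h is C² smooth, then |ξ_h(J)| = o(|J|) as |J| → 0; that is, for every ε > 0 there exists δ > 0 such that every closed interval J ⊆ I with |J| < δ satisfies |ξ_h(J)| ≤ ε·|J|. -/
open Set Filter MeasureTheory
open scoped Topology ENNReal NNReal

noncomputable section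

/-- The rotation (translation) number of a lift of a circle homeomorphism. -/
def rot (f : CircleDeg1Lift) : ℝ := f.translationNumber

/-- `x` lies in the integer-translation orbit of the break point `p`. -/
def IsBreakPt (p x : ℝ) : Prop := ∃ k : ℤ, x = p + (k : ℝ)

/-- `f` has a break at `p`: one-sided derivatives exist, are positive, with ratio `c`. -/
def HasBreakAt (f : ℝ → ℝ) (p c : ℝ) : Prop :=
  ∃ dL dR : ℝ, 0 < dL ∧ 0 < dR ∧ dL / dR = c ∧
    HasDerivWithinAt f dL (Set.Iio p) p ∧ HasDerivWithinAt f dR (Set.Ioi p) p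

/-- The class `B^r(p,c)` of circle homeomorphisms (given by their lifts): `C^r` with
positive derivative away from the break orbit, with break of size `c` at `p`. -/
def BreakClass (f : CircleDeg1Lift) (r : ℕ) (p c : ℝ) : Prop :=
  StrictMono ⇑f ∧ Continuous ⇑f ∧
    (∀ x : ℝ, ¬ IsBreakPt p x → ContDiffAt ℝ r ⇑f x ∧ 0 < deriv ⇑f x) ∧
    HasBreakAt ⇑f p c

/-- The class `B^ω(p,c)`: analytic away from the break orbit. -/
def BreakClassOmega (f : CircleDeg1Lift) (p c : ℝ) : Prop :=
  StrictMono ⇑f ∧ Continuous ⇑f ∧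
    (∀ x : ℝ, ¬ IsBreakPt p x → AnalyticAt ℝ ⇑f x ∧ 0 < deriv ⇑f x) ∧
    HasBreakAt ⇑f p c

/-- The class `B^{2+}(p,c) = ⋃_{ε>0} B^{2+ε}(p,c)`: `C²` away from the break with
`ε`-Hölder second derivative for some `ε > 0`. -/
def BreakClass2Plus (f : CircleDeg1Lift) (p c : ℝ) : Prop :=
  BreakClass f 2 p c ∧
    ∃ ε > (0:ℝ), ∃ C : ℝ, ∀ x ∈ Set.Ioo p (p+1), ∀ y ∈ Set.Ioo p (p+1),
      |deriv (deriv ⇑f) x - deriv (deriv ⇑f) y| ≤ C * |x - y| ^ ε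

/-- Iterates of the Gauss map on the fractional part of `ρ`. -/
def gaussIter (ρ : ℝ) : ℕ → ℝ
  | 0 => Int.fract ρ
  | n+1 => Int.fract (gaussIter ρ n)⁻¹

/-- The partial quotients `a_n` (`n ≥ 1`) of the continued fraction of `ρ`. -/
def cfA (ρ : ℝ) (n : ℕ) : ℕ := ⌊(gaussIter ρ (n-1))⁻¹⌋₊

/-- The denominators `q_n` of the continued fraction convergents of `ρ`. -/
def cfQ (ρ : ℝ) : ℕ → ℕ
  | 0 => 1
  | 1 => cfA ρ 1
  | n+2 => cfA ρ (n+2) * cfQ ρ (n+1) + cfQ ρ n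

/-- The numerators `p_n` of the continued fraction convergents of `ρ`. -/
def cfP (ρ : ℝ) : ℕ → ℤ
  | 0 => ⌊ρ⌋
  | 1 => cfA ρ 1 * ⌊ρ⌋ + 1
  | n+2 => cfA ρ (n+2) * cfP ρ (n+1) + cfP ρ n

/-- `μ_n = |q_n ρ − p_n|`, the invariant measure of the arcs `Δ_n^k`. -/
def cfMu (ρ : ℝ) (n : ℕ) : ℝ := |(cfQ ρ n : ℝ) * ρ - (cfP ρ n : ℝ)|

/-- The endpoint `f^{q_n}(p) − p_n` of the fundamental arc `Δ_n^0 = [p .. f^{q_n}(p)]`. -/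
def dynEnd (f : CircleDeg1Lift) (p : ℝ) (n : ℕ) : ℝ :=
  (f ^ cfQ (rot f) n) p - (cfP (rot f) n : ℝ)

/-- The arc `Δ_n^k = f^k(Δ_n^0)` of the dynamical partition, as a subset of `ℝ`. -/
def dynArc (f : CircleDeg1Lift) (p : ℝ) (n k : ℕ) : Set ℝ :=
  ⇑(f ^ k) '' Set.uIcc p (dynEnd f p n)

/-- The length `|Δ_n^k|`. -/
def dynLen (f : CircleDeg1Lift) (p : ℝ) (n k : ℕ) : ℝ :=
  |(f ^ k) (dynEnd f p n) - (f ^ k) p|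

/-- Projection from `ℝ` to the circle `ℝ/ℤ`. -/
def circProj : ℝ → AddCircle (1 : ℝ) := QuotientAddGroup.mk

/-- Containment of arcs regarded on the circle. -/
def arcSubset (A B : Set ℝ) : Prop := circProj '' A ⊆ circProj '' B

/-- The signed length of `Δ_n^0`. -/
def dynDelta (f : CircleDeg1Lift) (p : ℝ) (n : ℕ) : ℝ := dynEnd f p n - p

/-- `α_n = |Δ_n^0| / |Δ_{n−1}^0|`. -/
def alphaRatio (f : CircleDeg1Lift) (p : ℝ) (n : ℕ) : ℝ :=
  |dynDelta f p n| / |dynDelta f p (n - 1)|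

/-- The renormalization `f_n = A_n⁻¹ ∘ f^{q_n} ∘ A_n`, in the affine chart `A_n`
sending `0 ↦ p` and `−1 ↦ f^{q_{n−1}}(p)`. -/
def renF (f : CircleDeg1Lift) (p : ℝ) (n : ℕ) (z : ℝ) : ℝ :=
  (p - ((f ^ cfQ (rot f) n) (p - z * dynDelta f p (n-1)) - (cfP (rot f) n : ℝ))) /
    dynDelta f p (n-1)

/-- The renormalization `g_n = A_n⁻¹ ∘ f^{q_{n−1}} ∘ A_n`. -/
def renG (f : CircleDeg1Lift) (p : ℝ) (n : ℕ) (z : ℝ) : ℝ :=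
  (p - ((f ^ cfQ (rot f) (n-1)) (p - z * dynDelta f p (n-1)) - (cfP (rot f) (n-1) : ℝ))) /
    dynDelta f p (n-1)

/-- The map `h_n`: `f^{q_n}` written in the affine chart `w` with `w(x₀) = 0`,
`w(f^{q_{n−1}}(x₀)) = −1`, for an arbitrary base point `x₀`. -/
def renH (f : CircleDeg1Lift) (x₀ : ℝ) (n : ℕ) (w : ℝ) : ℝ :=
  (x₀ - ((f ^ cfQ (rot f) n)
      (x₀ - w * ((f ^ cfQ (rot f) (n-1)) x₀ - (cfP (rot f) (n-1) : ℝ) - x₀)) -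
    (cfP (rot f) n : ℝ))) /
  ((f ^ cfQ (rot f) (n-1)) x₀ - (cfP (rot f) (n-1) : ℝ) - x₀)

/-- `c_n = c^{(−1)^n}`. -/
def cSeq (c : ℝ) (n : ℕ) : ℝ := if Even n then c else c⁻¹

/-- Second derivative within a set. -/
def d2Within (F : ℝ → ℝ) (s : Set ℝ) (z : ℝ) : ℝ := derivWithin (derivWithin F s) s z

/-- `ln (Rf_m)'` as a function on the fundamental interval `[−1, α_m]` of the
renormalized circle, taking the `f_m`-branch on `[−1,0]` and the `g_m`-branch on `(0, α_m]`. -/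
def renPhi (f : CircleDeg1Lift) (p : ℝ) (m : ℕ) (z : ℝ) : ℝ :=
  if z ≤ 0 then Real.log (derivWithin (renF f p m) (Set.Icc (-1:ℝ) 0) z)
  else Real.log (derivWithin (renG f p m) (Set.Icc (0:ℝ) (alphaRatio f p m)) z)

/-- The cross-ratio distortion `ξ_f([a,b]) = ln f'(a) + ln f'(b) − 2 ln ((f b − f a)/(b − a))`. -/
def xi (f : ℝ → ℝ) (a b : ℝ) : ℝ :=
  Real.log (deriv f a) + Real.log (deriv f b) - 2 * Real.log ((f b - f a) / (b - a))

/-- The cross-ratio distortion computed with one-sided (within `s`) derivatives. -/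
def xiOn (f : ℝ → ℝ) (s : Set ℝ) (a b : ℝ) : ℝ :=
  Real.log (derivWithin f s a) + Real.log (derivWithin f s b) -
    2 * Real.log ((f b - f a) / (b - a))

/-- The Schwarzian derivative `S(f) = f'''/f' − (3/2)(f''/f')²`. -/
def schwarzian (f : ℝ → ℝ) (x : ℝ) : ℝ :=
  iteratedDeriv 3 f x / deriv f x - (3/2) * (iteratedDeriv 2 f x / deriv f x) ^ 2

/-- `g` is fractional linear (Möbius) on the fundamental interval `(p, p+1)`. -/
def IsMobiusOn (g : ℝ → ℝ) (p : ℝ) : Prop :=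
  ∃ a b c d : ℝ, a * d - b * c ≠ 0 ∧
    ∀ x ∈ Set.Ioo p (p + 1), c * x + d ≠ 0 ∧ g x = (a * x + b) / (c * x + d)

/-- `h` is `C^{1+α}`: continuously differentiable with `α`-Hölder derivative. -/
def C1Holder (h : ℝ → ℝ) (α : ℝ) : Prop :=
  ContDiff ℝ 1 h ∧ ∃ C : ℝ, ∀ x y : ℝ, |deriv h x - deriv h y| ≤ C * |x - y| ^ α

/-- `h` is (a lift of) an orientation-preserving `C^{1+α}` circle diffeomorphism. -/
def IsC1HolderDiffeo (h : CircleDeg1Lift) (α : ℝ) : Prop :=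
  C1Holder ⇑h α ∧ ∀ x : ℝ, 0 < deriv ⇑h x

/-- `h` is (a lift of) an orientation-preserving `C²` circle diffeomorphism. -/
def IsC2Diffeo (h : CircleDeg1Lift) : Prop :=
  ContDiff ℝ 2 ⇑h ∧ ∀ x : ℝ, 0 < deriv ⇑h x

/-- A piecewise differentiable circle homeomorphism (given by its lift). -/
def PiecewiseDiffCircle (f : CircleDeg1Lift) : Prop :=
  StrictMono ⇑f ∧ Continuous ⇑f ∧
    ∃ s : Finset ℝ, ∀ x : ℝ, (∀ a ∈ s, ∀ k : ℤ, x ≠ a + (k : ℝ)) →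
      DifferentiableAt ℝ ⇑f x ∧ 0 < deriv ⇑f x

/-- The Möbius map `F_{α,v,c}(z) = (α + √c z)/(1 − v z)`. -/
def mobF (α v c : ℝ) (z : ℝ) : ℝ := (α + Real.sqrt c * z) / (1 - v * z)

/-- The Möbius map `G_{α,v,c}(z) = α(z − √c)/(α√c + z(1 + v − √c))`. -/
def mobG (α v c : ℝ) (z : ℝ) : ℝ :=
  α * (z - Real.sqrt c) / (α * Real.sqrt c + z * (1 + v - Real.sqrt c))

/-- The parameter domain `U_c`. -/
def Ucal (c : ℝ) : Set (ℝ × ℝ) :=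
  if 1 < c then Set.Icc 0 (Real.sqrt c) ×ˢ Set.Icc ((Real.sqrt c - 1)/2) (Real.sqrt c - 1)
  else Set.Icc 0 (Real.sqrt c) ×ˢ Set.Icc (Real.sqrt c - 1) ((Real.sqrt c - 1)/2)

/-- The lift to `ℝ` (periodic with period `1 + α`) of the circle homeomorphism
`T_{α,v,c}` of `[−1,α]/(−1 ∼ α)`, equal to `F_{α,v,c}` on `[−1,0]` and `G_{α,v,c}` on `[0,α]`. -/
def Tlift (α v c : ℝ) (x : ℝ) : ℝ :=
  (if x - ⌊(x + 1) / (1 + α)⌋ * (1 + α) ≤ 0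
    then mobF α v c (x - ⌊(x + 1) / (1 + α)⌋ * (1 + α))
    else mobG α v c (x - ⌊(x + 1) / (1 + α)⌋ * (1 + α)) + (1 + α)) +
  ⌊(x + 1) / (1 + α)⌋ * (1 + α)

/-- `T_{α,v,c}` has rotation number `ρ` (normalized by the circumference `1 + α`). -/
def TliftRotation (α v c ρ : ℝ) : Prop :=
  ∀ x : ℝ, Filter.Tendsto (fun n : ℕ => ((Tlift α v c)^[n] x - x) / ((1 + α) * n))
    Filter.atTop (nhds ρ)


lemma log_sub_log_le' {m u v : ℝ} (hm : 0 < m) (hu : m ≤ u) (huv : u ≤ v) :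
    Real.log v - Real.log u ≤ (v - u) / m := by
  have hu0 : 0 < u := lt_of_lt_of_le hm hu
  have hv0 : 0 < v := lt_of_lt_of_le hu0 huv
  rw [← Real.log_div hv0.ne' hu0.ne']
  have h2 : Real.log (v / u) ≤ v / u - 1 := Real.log_le_sub_one_of_pos (by positivity)
  have h3 : v / u - 1 = (v - u) / u := by field_simp
  have h4 : (v - u) / u ≤ (v - u) / m := by gcongr
  linarith

lemma abs_log_sub_log_le' {m u v : ℝ} (hm : 0 < m) (hu : m ≤ u) (hv : m ≤ v) :
    |Real.log u - Real.log v| ≤ |u - v| / m := by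
  have hu0 : 0 < u := lt_of_lt_of_le hm hu
  have hv0 : 0 < v := lt_of_lt_of_le hm hv
  rcases le_total u v with hle | hle
  · have h1 : Real.log u ≤ Real.log v := Real.log_le_log hu0 hle
    rw [abs_sub_comm, abs_of_nonneg (sub_nonneg.mpr h1), abs_sub_comm,
      abs_of_nonneg (sub_nonneg.mpr hle)]
    exact log_sub_log_le' hm hu hle
  · have h1 : Real.log v ≤ Real.log u := Real.log_le_log hv0 hle
    rw [abs_of_nonneg (sub_nonneg.mpr h1), abs_of_nonneg (sub_nonneg.mpr hle)]
    exact log_sub_log_le' hm hv hle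

lemma unif_of_cont' {A B : ℝ} (F : ℝ → ℝ) (hF : ContinuousOn F (Set.Icc A B))
    {ε : ℝ} (hε : 0 < ε) :
    ∃ δ > (0:ℝ), ∀ x ∈ Set.Icc A B, ∀ y ∈ Set.Icc A B, |x - y| ≤ δ → |F x - F y| ≤ ε := by
  have huc : UniformContinuousOn F (Set.Icc A B) :=
    isCompact_Icc.uniformContinuousOn_of_continuous hF
  rw [Metric.uniformContinuousOn_iff_le] at huc
  obtain ⟨δ, hδ, hd⟩ := huc ε hε
  exact ⟨δ, hδ, fun x hx y hy hxy => by
    simpa [Real.dist_eq] using hd x hx y hy (by simpa [Real.dist_eq] using hxy)⟩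

lemma myFTC {A B u v : ℝ} (huv : u ≤ v) (hA : A ≤ u) (hB : v ≤ B)
    (F F' : ℝ → ℝ) (hF : ContinuousOn F (Set.Icc A B))
    (hF' : ContinuousOn F' (Set.Icc A B))
    (hd : ∀ x ∈ Set.Ioo A B, HasDerivAt F (F' x) x) :
    ∫ y in u..v, F' y = F v - F u := by
  have hsub : Set.Icc u v ⊆ Set.Icc A B := Set.Icc_subset_Icc hA hB
  apply intervalIntegral.integral_eq_sub_of_hasDeriv_right_of_le huv (hF.mono hsub)
  · intro x hx
    exact (hd x ⟨lt_of_le_of_lt hA hx.1, lt_of_lt_of_le hx.2 hB⟩).hasDerivWithinAt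
  · exact (hF'.mono hsub).intervalIntegrable_of_Icc huv

/-- **Lemma (cross-ratio distortion of a smooth map).** For `h : [A,B] → ℝ` with positive
derivative: if `h` is `C^{1+α}` then `|ξ_h(J)| = O(|J|^α)`, and if `h` is `C²` then
`|ξ_h(J)| = o(|J|)` as `|J| → 0`, for closed intervals `J ⊆ [A,B]`. -/
theorem xi_bound_of_smooth (A B : ℝ) (hAB : A < B) (h : ℝ → ℝ)
    (hpos : ∀ x ∈ Set.Icc A B, 0 < derivWithin h (Set.Icc A B) x) :
    (∀ α : ℝ, 0 < α → α ≤ 1 →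
      ContDiffOn ℝ 1 h (Set.Icc A B) →
      (∃ K : ℝ, ∀ x ∈ Set.Icc A B, ∀ y ∈ Set.Icc A B,
        |derivWithin h (Set.Icc A B) x - derivWithin h (Set.Icc A B) y| ≤ K * |x - y| ^ α) →
      ∃ C : ℝ, ∀ a b : ℝ, a < b → Set.Icc a b ⊆ Set.Icc A B →
        |xiOn h (Set.Icc A B) a b| ≤ C * (b - a) ^ α) ∧
    (ContDiffOn ℝ 2 h (Set.Icc A B) →
      ∀ ε : ℝ, 0 < ε → ∃ δ > (0:ℝ), ∀ a b : ℝ, a < b → Set.Icc a b ⊆ Set.Icc A B →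
        b - a < δ → |xiOn h (Set.Icc A B) a b| ≤ ε * (b - a)) := by
  have hsU : UniqueDiffOn ℝ (Set.Icc A B) := uniqueDiffOn_Icc hAB
  set s := Set.Icc A B with hs
  set h₁ := derivWithin h s with hh₁
  have key : ∀ (hC1 : ContDiffOn ℝ 1 h s) (a b : ℝ), a < b → Set.Icc a b ⊆ s →
      ∃ c ∈ Set.Ioo a b, h₁ c = (h b - h a) / (b - a) := by
    intro hC1 a b hab hsub
    have hIoo : Set.Ioo a b ⊆ Set.Ioo A B := by
      intro x hx
      have ha' : A ≤ a := (hsub (Set.left_mem_Icc.mpr hab.le)).1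
      have hb' : b ≤ B := (hsub (Set.right_mem_Icc.mpr hab.le)).2
      exact ⟨lt_of_le_of_lt ha' hx.1, lt_of_lt_of_le hx.2 hb'⟩
    have hder : ∀ x ∈ Set.Ioo a b, HasDerivAt h (h₁ x) x := by
      intro x hx
      have hxs : s ∈ 𝓝 x := by
        rw [hs]
        exact Icc_mem_nhds (hIoo hx).1 (hIoo hx).2
      exact (((hC1.differentiableOn one_ne_zero) x
        (hsub (Set.Ioo_subset_Icc_self hx))).hasDerivWithinAt).hasDerivAt hxs
    exact exists_hasDerivAt_eq_slope h h₁ hab (hC1.continuousOn.mono hsub) hder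
  constructor
  · -- Part 1: Hölder
    rintro α hα0 hα1 hC1 ⟨K, hK⟩
    have hcont : ContinuousOn h₁ s := hC1.continuousOn_derivWithin hsU le_rfl
    obtain ⟨x₀, hx₀, hmin⟩ := isCompact_Icc.exists_isMinOn
      (Set.nonempty_Icc.mpr hAB.le) hcont
    set m₀ := h₁ x₀ with hm₀def
    have hm₀ : 0 < m₀ := hpos x₀ hx₀
    refine ⟨2 * max K 0 / m₀, ?_⟩
    intro a b hab hsub
    obtain ⟨c, hc, hceq⟩ := key hC1 a b hab hsub
    have hmema : a ∈ s := hsub (Set.left_mem_Icc.mpr hab.le)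
    have hmemb : b ∈ s := hsub (Set.right_mem_Icc.mpr hab.le)
    have hmemc : c ∈ s := hsub (Set.Ioo_subset_Icc_self hc)
    have hbd : ∀ x ∈ s, |x - c| ≤ b - a → |Real.log (h₁ x) - Real.log (h₁ c)| ≤
        max K 0 * (b - a) ^ α / m₀ := by
      intro x hx hxc
      have h1 : |Real.log (h₁ x) - Real.log (h₁ c)| ≤ |h₁ x - h₁ c| / m₀ :=
        abs_log_sub_log_le' hm₀ (hmin hx) (hmin hmemc)
      have h2 : |h₁ x - h₁ c| ≤ K * |x - c| ^ α := hK x hx c hmemc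
      have h3 : K * |x - c| ^ α ≤ max K 0 * (b - a) ^ α := by
        have := Real.rpow_le_rpow (abs_nonneg (x - c)) hxc hα0.le
        have h0 : (0:ℝ) ≤ |x - c| ^ α := Real.rpow_nonneg (abs_nonneg _) α
        nlinarith [le_max_left K 0, le_max_right K 0]
      calc |Real.log (h₁ x) - Real.log (h₁ c)| ≤ |h₁ x - h₁ c| / m₀ := h1
        _ ≤ max K 0 * (b - a) ^ α / m₀ := by gcongr; linarith
    have hba : |a - c| ≤ b - a := by
      rw [abs_sub_comm, abs_of_nonneg (by linarith [hc.1.le] : (0:ℝ) ≤ c - a)]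
      linarith [hc.2.le]
    have hbb : |b - c| ≤ b - a := by
      rw [abs_of_nonneg (by linarith [hc.2.le] : (0:ℝ) ≤ b - c)]
      linarith [hc.1.le]
    have ha' := hbd a hmema hba
    have hb' := hbd b hmemb hbb
    have hxieq : xiOn h s a b =
        (Real.log (h₁ a) - Real.log (h₁ c)) + (Real.log (h₁ b) - Real.log (h₁ c)) := by
      rw [xiOn, ← hceq]; ring
    rw [hxieq]
    calc |(Real.log (h₁ a) - Real.log (h₁ c)) + (Real.log (h₁ b) - Real.log (h₁ c))|
        ≤ |Real.log (h₁ a) - Real.log (h₁ c)| + |Real.log (h₁ b) - Real.log (h₁ c)| :=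
          abs_add_le _ _
      _ ≤ max K 0 * (b - a) ^ α / m₀ + max K 0 * (b - a) ^ α / m₀ := by linarith
      _ = 2 * max K 0 / m₀ * (b - a) ^ α := by ring
  · -- Part 2
    intro hC2 ε hε
    have hC1 : ContDiffOn ℝ 1 h s := hC2.of_le one_le_two
    have hcont : ContinuousOn h₁ s := hC1.continuousOn_derivWithin hsU le_rfl
    have hh₁C1 : ContDiffOn ℝ 1 h₁ s := hC2.derivWithin hsU (by norm_num)
    set ψ := derivWithin h₁ s with hψdef
    have hψcont : ContinuousOn ψ s := hh₁C1.continuousOn_derivWithin hsU le_rfl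
    obtain ⟨x₀, hx₀, hmin⟩ := isCompact_Icc.exists_isMinOn
      (Set.nonempty_Icc.mpr hAB.le) hcont
    set m₀ := h₁ x₀ with hm₀def
    have hm₀ : 0 < m₀ := hpos x₀ hx₀
    set ρ := fun x => ψ x / h₁ x with hρdef
    have hρcont : ContinuousOn ρ s := hψcont.div hcont (fun x hx => (hpos x hx).ne')
    have hLcont : ContinuousOn (fun x => Real.log (h₁ x)) s :=
      Real.continuousOn_log.comp hcont
        (fun x hx => Set.mem_compl_singleton_iff.mpr (hpos x hx).ne')
    obtain ⟨δ₁, hδ₁, hU₁⟩ := unif_of_cont' ρ hρcont (half_pos hε)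
    obtain ⟨δ₂, hδ₂, hU₂⟩ := unif_of_cont' ψ hψcont (show (0:ℝ) < ε * m₀ / 2 by positivity)
    refine ⟨min δ₁ δ₂, lt_min hδ₁ hδ₂, ?_⟩
    intro a b hab hsub hlt
    have hDδ₁ : b - a ≤ δ₁ := le_trans hlt.le (min_le_left _ _)
    have hDδ₂ : b - a ≤ δ₂ := le_trans hlt.le (min_le_right _ _)
    have hD0 : (0:ℝ) < b - a := by linarith
    have hmema : a ∈ s := hsub (Set.left_mem_Icc.mpr hab.le)
    have hmemb : b ∈ s := hsub (Set.right_mem_Icc.mpr hab.le)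
    have hA' : A ≤ a := hmema.1
    have hB' : b ≤ B := hmemb.2
    have hmemm : (a + b) / 2 ∈ s := hsub ⟨by linarith, by linarith⟩
    have hsub' : ∀ {u v : ℝ}, a ≤ u → v ≤ b → Set.Icc u v ⊆ s :=
      fun hu hv => Set.Subset.trans (Set.Icc_subset_Icc hu hv) hsub
    -- derivative facts on Ioo A B
    have hdh : ∀ x ∈ Set.Ioo A B, HasDerivAt h (h₁ x) x := by
      intro x hx
      have hxs : s ∈ 𝓝 x := by rw [hs]; exact Icc_mem_nhds hx.1 hx.2
      exact (((hC1.differentiableOn one_ne_zero) x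
        (Set.Ioo_subset_Icc_self hx)).hasDerivWithinAt).hasDerivAt hxs
    have hdh₁ : ∀ x ∈ Set.Ioo A B, HasDerivAt h₁ (ψ x) x := by
      intro x hx
      have hxs : s ∈ 𝓝 x := by rw [hs]; exact Icc_mem_nhds hx.1 hx.2
      exact (((hh₁C1.differentiableOn one_ne_zero) x
        (Set.Ioo_subset_Icc_self hx)).hasDerivWithinAt).hasDerivAt hxs
    have hdL : ∀ x ∈ Set.Ioo A B, HasDerivAt (fun y => Real.log (h₁ y)) (ρ x) x :=
      fun x hx => (hdh₁ x hx).log (hpos x (Set.Ioo_subset_Icc_self hx)).ne'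
    -- FTC instances
    have FTCρ : ∀ u v : ℝ, a ≤ u → u ≤ v → v ≤ b →
        ∫ y in u..v, ρ y = Real.log (h₁ v) - Real.log (h₁ u) := fun u v h1 h2 h3 =>
      myFTC h2 (hA'.trans h1) (h3.trans hB') _ ρ hLcont hρcont hdL
    have FTCh : ∫ y in a..b, h₁ y = h b - h a :=
      myFTC hab.le hA' hB' h h₁ hC1.continuousOn hcont hdh
    have FTCψ : ∀ t ∈ Set.Icc a b, ∫ y in t..(a+b)/2, ψ y = h₁ ((a+b)/2) - h₁ t := by
      intro t ht
      rcases le_total t ((a+b)/2) with htm | htm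
      · exact myFTC htm (hA'.trans ht.1) ((by linarith : (a+b)/2 ≤ b).trans hB')
          h₁ ψ hcont hψcont hdh₁
      · rw [intervalIntegral.integral_symm,
          myFTC htm (hA'.trans (by linarith : a ≤ (a+b)/2)) (ht.2.trans hB')
            h₁ ψ hcont hψcont hdh₁]
        ring
    -- slope ≥ m₀ and positive
    obtain ⟨c, hc, hceq⟩ := key hC1 a b hab hsub
    have hS : m₀ ≤ (h b - h a) / (b - a) := hceq ▸ hmin (hsub (Set.Ioo_subset_Icc_self hc))
    set L := fun x => Real.log (h₁ x) with hLdef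
    -- Term 1 halves
    have half1 : ∀ u v : ℝ, a ≤ u → u ≤ v → v ≤ b → v - u = (b - a) / 2 →
        |L v - L u - ρ ((a+b)/2) * ((b - a)/2)| ≤ ε / 2 * ((b - a) / 2) := by
      intro u v h1 h2 h3 h4
      have hint : IntervalIntegrable ρ MeasureTheory.volume u v :=
        (hρcont.mono (hsub' h1 h3)).intervalIntegrable_of_Icc h2
      have heq : L v - L u - ρ ((a+b)/2) * ((b - a)/2) = ∫ y in u..v, (ρ y - ρ ((a+b)/2)) := by
        rw [intervalIntegral.integral_sub hint intervalIntegrable_const,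
          FTCρ u v h1 h2 h3, intervalIntegral.integral_const, smul_eq_mul, h4]
        ring
      rw [heq]
      have hpt : ∀ y ∈ Set.uIoc u v, ‖ρ y - ρ ((a+b)/2)‖ ≤ ε / 2 := by
        intro y hy
        rw [Set.uIoc_of_le h2] at hy
        have hys : y ∈ s := hsub ⟨h1.trans hy.1.le, hy.2.trans h3⟩
        rw [Real.norm_eq_abs]
        apply hU₁ y hys _ hmemm
        rw [abs_le]
        have hy1 := hy.1.le
        have hy2 := hy.2
        constructor <;> linarith
      have hbnd := intervalIntegral.norm_integral_le_of_norm_le_const hpt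
      rw [Real.norm_eq_abs, abs_of_nonneg (by linarith : (0:ℝ) ≤ v - u)] at hbnd
      calc |∫ y in u..v, (ρ y - ρ ((a+b)/2))| ≤ ε / 2 * (v - u) := hbnd
        _ = ε / 2 * ((b - a)/2) := by rw [h4]
    have term1 : |L a + L b - 2 * L ((a+b)/2)| ≤ ε / 2 * (b - a) := by
      have hA1 := half1 a ((a+b)/2) le_rfl (by linarith) (by linarith) (by ring)
      have hB1 := half1 ((a+b)/2) b (by linarith) (by linarith) le_rfl (by ring)
      have : L a + L b - 2 * L ((a+b)/2) =
          (L b - L ((a+b)/2) - ρ ((a+b)/2) * ((b - a)/2)) -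
          (L ((a+b)/2) - L a - ρ ((a+b)/2) * ((b - a)/2)) := by ring
      rw [this]
      calc |_ - _| ≤ |L b - L ((a+b)/2) - ρ ((a+b)/2) * ((b - a)/2)| +
            |L ((a+b)/2) - L a - ρ ((a+b)/2) * ((b - a)/2)| := abs_sub _ _
        _ ≤ ε / 2 * ((b - a)/2) + ε / 2 * ((b - a)/2) := add_le_add hB1 hA1
        _ = ε / 2 * (b - a) := by ring
    -- Term 2
    have gbound : ∀ t ∈ Set.Icc a b,
        |h₁ ((a+b)/2) - h₁ t - ψ ((a+b)/2) * ((a+b)/2 - t)| ≤ ε * m₀ / 2 * ((b - a)/2) := by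
      intro t ht
      have huIcc : Set.uIcc t ((a+b)/2) ⊆ Set.Icc a b :=
        Set.uIcc_subset_Icc ht ⟨by linarith [ht.1, ht.2], by linarith [ht.1, ht.2]⟩
      have hint : IntervalIntegrable ψ MeasureTheory.volume t ((a+b)/2) :=
        ((hψcont.mono hsub).mono huIcc).intervalIntegrable
      have heq : h₁ ((a+b)/2) - h₁ t - ψ ((a+b)/2) * ((a+b)/2 - t) =
          ∫ y in t..(a+b)/2, (ψ y - ψ ((a+b)/2)) := by
        rw [intervalIntegral.integral_sub hint intervalIntegrable_const,
          FTCψ t ht, intervalIntegral.integral_const, smul_eq_mul]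
        ring
      rw [heq]
      have hpt : ∀ y ∈ Set.uIoc t ((a+b)/2), ‖ψ y - ψ ((a+b)/2)‖ ≤ ε * m₀ / 2 := by
        intro y hy
        have hy' : y ∈ Set.Icc a b := huIcc (Set.uIoc_subset_uIcc hy)
        rw [Real.norm_eq_abs]
        apply hU₂ y (hsub hy') _ hmemm
        rw [abs_le]
        constructor <;> linarith [hy'.1, hy'.2]
      have hbnd := intervalIntegral.norm_integral_le_of_norm_le_const hpt
      rw [Real.norm_eq_abs] at hbnd
      have habs : |(a+b)/2 - t| ≤ (b - a)/2 := by
        rw [abs_le]; constructor <;> linarith [ht.1, ht.2]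
      calc |∫ y in t..(a+b)/2, (ψ y - ψ ((a+b)/2))| ≤ ε * m₀ / 2 * |(a+b)/2 - t| := hbnd
        _ ≤ ε * m₀ / 2 * ((b - a)/2) := by gcongr
    have i1 : IntervalIntegrable (fun t => h₁ ((a+b)/2) - h₁ t) MeasureTheory.volume a b :=
      (continuousOn_const.sub (hcont.mono hsub)).intervalIntegrable_of_Icc hab.le
    have i2 : IntervalIntegrable (fun t => ψ ((a+b)/2) * ((a+b)/2 - t)) MeasureTheory.volume a b :=
      ((continuous_const.mul (continuous_const.sub continuous_id)).intervalIntegrable a b)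
    have e2 : ∫ t in a..b, ((a+b)/2 - t) = 0 := by
      rw [intervalIntegral.integral_sub intervalIntegrable_const
        intervalIntegral.intervalIntegrable_id, intervalIntegral.integral_const,
        integral_id, smul_eq_mul]
      ring
    have e3 : ∫ t in a..b, (ψ ((a+b)/2) * ((a+b)/2 - t)) = 0 := by
      rw [intervalIntegral.integral_const_mul, e2, mul_zero]
    have heq2 : h₁ ((a+b)/2) * (b - a) - (h b - h a) =
        ∫ t in a..b, (h₁ ((a+b)/2) - h₁ t - ψ ((a+b)/2) * ((a+b)/2 - t)) := by
      rw [intervalIntegral.integral_sub i1 i2,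
        intervalIntegral.integral_sub intervalIntegrable_const
          ((hcont.mono hsub).intervalIntegrable_of_Icc hab.le),
        FTCh, e3, intervalIntegral.integral_const, smul_eq_mul]
      ring
    have term2 : |h₁ ((a+b)/2) * (b - a) - (h b - h a)| ≤ ε * m₀ / 2 * ((b - a)/2) * (b - a) := by
      rw [heq2]
      have hpt : ∀ t ∈ Set.uIoc a b,
          ‖h₁ ((a+b)/2) - h₁ t - ψ ((a+b)/2) * ((a+b)/2 - t)‖ ≤ ε * m₀ / 2 * ((b - a)/2) := by
        intro t ht
        rw [Real.norm_eq_abs]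
        exact gbound t (Set.mem_of_mem_of_subset (Set.uIoc_subset_uIcc ht)
          (by rw [Set.uIcc_of_le hab.le]))
      have hbnd := intervalIntegral.norm_integral_le_of_norm_le_const hpt
      rw [Real.norm_eq_abs, abs_of_pos hD0] at hbnd
      exact hbnd
    have hslope : |h₁ ((a+b)/2) - (h b - h a)/(b - a)| ≤ ε * (b - a) * m₀ / 4 := by
      have hrw : h₁ ((a+b)/2) - (h b - h a)/(b - a) =
          (h₁ ((a+b)/2) * (b - a) - (h b - h a)) / (b - a) := by
        field_simp
      rw [hrw, abs_div, abs_of_pos hD0, div_le_iff₀ hD0]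
      nlinarith [term2]
    have term2L : |L ((a+b)/2) - Real.log ((h b - h a)/(b - a))| ≤ ε * (b - a) / 4 := by
      have h1 := abs_log_sub_log_le' hm₀ (hmin hmemm) hS
      have h2 : |h₁ ((a+b)/2) - (h b - h a)/(b - a)| / m₀ ≤ ε * (b - a) / 4 := by
        rw [div_le_iff₀ hm₀]
        nlinarith [hslope]
      exact le_trans h1 h2
    have hxieq : xiOn h s a b = (L a + L b - 2 * L ((a+b)/2)) +
        2 * (L ((a+b)/2) - Real.log ((h b - h a)/(b - a))) := by
      simp only [xiOn, ← hh₁, hLdef]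
      ring
    rw [hxieq]
    calc |(L a + L b - 2 * L ((a+b)/2)) +
        2 * (L ((a+b)/2) - Real.log ((h b - h a)/(b - a)))|
        ≤ |L a + L b - 2 * L ((a+b)/2)| +
          2 * |L ((a+b)/2) - Real.log ((h b - h a)/(b - a))| := by
          calc |_ + _| ≤ |L a + L b - 2 * L ((a+b)/2)| +
              |2 * (L ((a+b)/2) - Real.log ((h b - h a)/(b - a)))| := abs_add_le _ _
            _ = _ := by rw [abs_mul, abs_two]
      _ ≤ ε / 2 * (b - a) + 2 * (ε * (b - a) / 4) := by linarith [term1, term2L]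
      _ = ε * (b - a) := by ring


end
end

section
/- Let r(c) ∈ (0,1) be a constant (depending only on c) such that for all f ∈ B^{2+}_irr(p,c) and sufficiently large n every Δ_{n−1}^k contains a subarc Δ_n^l with |Δ_n^l| ≥ r(c)|Δ_{n−1}^k|. Then for every γ > 1 − r(c) there exists A = A(c,γ) such that for every f ∈ B^{2+}_irr(p,c) and all sufficiently large n with a_{n+1} ≥ A, each arc Δ_{n−1}^k, 0 ≤ k < q_n, contains a subarc Δ_n^l, 0 ≤ l < q_{n+1}, with |Δ_n^l|/|Δ_{n−1}^k| ≤ γ · μ(Δ_n^l)/μ(Δ_{n−1}^k). -/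
open Set Filter MeasureTheory
open scoped Topology ENNReal NNReal

noncomputable section

namespace CFaux

variable {ρ : ℝ}

/-- θ n = q_n ρ - p_n -/
def th (ρ : ℝ) (n : ℕ) : ℝ := (cfQ ρ n : ℝ) * ρ - (cfP ρ n : ℝ)

lemma cfMu_eq (n : ℕ) : cfMu ρ n = |th ρ n| := rfl

lemma irr_fract {y : ℝ} (hy : Irrational y) : Irrational (Int.fract y) := by
  rw [Int.fract]
  exact hy.sub_intCast _

lemma gauss_irr (hρ : Irrational ρ) : ∀ n, Irrational (gaussIter ρ n)
  | 0 => irr_fract hρ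
  | (n+1) => irr_fract ((gauss_irr hρ n).inv)

lemma fract_mem {y : ℝ} (hy : Irrational y) : 0 < Int.fract y ∧ Int.fract y < 1 := by
  have h := irr_fract hy
  refine ⟨lt_of_le_of_ne (Int.fract_nonneg y) ?_, Int.fract_lt_one y⟩
  intro h0
  exact (h.ne_int 0) (by simpa using h0.symm)

lemma gauss_pos (hρ : Irrational ρ) (n : ℕ) :
    0 < gaussIter ρ n ∧ gaussIter ρ n < 1 := by
  cases n with
  | zero => exact fract_mem hρ
  | succ m => exact fract_mem ((gauss_irr hρ m).inv)

lemma gauss_inv_gt_one (hρ : Irrational ρ) (n : ℕ) : 1 < (gaussIter ρ n)⁻¹ :=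
  (one_lt_inv₀ (gauss_pos hρ n).1).2 (gauss_pos hρ n).2

lemma gauss_inv_eq (hρ : Irrational ρ) (n : ℕ) :
    (gaussIter ρ n)⁻¹ = (cfA ρ (n+1) : ℝ) + gaussIter ρ (n+1) := by
  have h1 : gaussIter ρ (n+1) = Int.fract (gaussIter ρ n)⁻¹ := rfl
  have hnn : (0:ℝ) ≤ (gaussIter ρ n)⁻¹ := inv_nonneg.2 (gauss_pos hρ n).1.le
  have h2 : ((cfA ρ (n+1) : ℕ) : ℝ) = ((⌊(gaussIter ρ n)⁻¹⌋ : ℤ) : ℝ) := by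
    have h3 := Int.natCast_floor_eq_floor hnn
    simp only [cfA, Nat.add_sub_cancel]
    exact_mod_cast h3
  rw [h1, h2, Int.fract]
  ring

lemma cfA_pos (hρ : Irrational ρ) (n : ℕ) : 1 ≤ cfA ρ (n+1) := by
  have := gauss_inv_gt_one hρ n
  simp only [cfA, Nat.add_sub_cancel]
  exact Nat.le_floor (by exact_mod_cast this.le)

lemma cfQ_pos (hρ : Irrational ρ) : ∀ n, 1 ≤ cfQ ρ n
  | 0 => le_refl 1
  | 1 => cfA_pos hρ 0
  | (n+2) => le_trans (cfQ_pos hρ n) (by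
      have : cfQ ρ (n+2) = cfA ρ (n+2) * cfQ ρ (n+1) + cfQ ρ n := rfl
      omega)

/-- θ satisfies θ n = (-1)^n ∏_{i<n+1} x_i -/
lemma th_prod (hρ : Irrational ρ) :
    ∀ n, th ρ n = (-1)^n * ∏ i ∈ Finset.range (n+1), gaussIter ρ i := by
  have key : ∀ m, gaussIter ρ m * gaussIter ρ (m+1) = 1 - (cfA ρ (m+1) : ℝ) * gaussIter ρ m := by
    intro m
    have h0 : gaussIter ρ m ≠ 0 := ne_of_gt (gauss_pos hρ m).1
    have h := gauss_inv_eq hρ m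
    have h2 : gaussIter ρ m * (gaussIter ρ m)⁻¹ = 1 := mul_inv_cancel₀ h0
    rw [h] at h2
    linear_combination h2
  intro n
  induction n using Nat.twoStepInduction with
  | zero =>
    have hq : cfQ ρ 0 = 1 := rfl
    have hp : cfP ρ 0 = ⌊ρ⌋ := rfl
    have hx : gaussIter ρ 0 = ρ - ⌊ρ⌋ := rfl
    rw [th, hq, hp, Finset.prod_range_one, hx]
    push_cast; ring
  | one =>
    have hq : cfQ ρ 1 = cfA ρ 1 := rfl
    have hp : cfP ρ 1 = (cfA ρ 1 : ℤ) * ⌊ρ⌋ + 1 := rfl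
    have hx : gaussIter ρ 0 = ρ - ⌊ρ⌋ := rfl
    have hk := key 0
    rw [hx] at hk
    rw [th, hq, hp, Finset.prod_range_succ, Finset.prod_range_one, hx]
    push_cast
    linear_combination hk
  | more n ih ih1 =>
    have hrecQ : (cfQ ρ (n+2) : ℝ) = (cfA ρ (n+2) : ℝ) * cfQ ρ (n+1) + cfQ ρ n := by
      have h : cfQ ρ (n+2) = cfA ρ (n+2) * cfQ ρ (n+1) + cfQ ρ n := rfl
      exact_mod_cast congrArg (fun z : ℕ => (z:ℝ)) h
    have hrecP : (cfP ρ (n+2) : ℝ) = (cfA ρ (n+2) : ℝ) * cfP ρ (n+1) + cfP ρ n := by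
      have h : cfP ρ (n+2) = (cfA ρ (n+2) : ℤ) * cfP ρ (n+1) + cfP ρ n := rfl
      push_cast [h]; ring
    have hth : th ρ (n+2) = (cfA ρ (n+2) : ℝ) * th ρ (n+1) + th ρ n := by
      simp only [th, hrecQ, hrecP]; ring
    have hk := key (n+1)
    rw [hth, ih, ih1, Finset.prod_range_succ (n := n+2), Finset.prod_range_succ (n := n+1)]
    linear_combination (-(-1:ℝ)^n * (∏ i ∈ Finset.range (n+1), gaussIter ρ i)) * hk


lemma prodx_mem (hρ : Irrational ρ) (n : ℕ) :
    0 < ∏ i ∈ Finset.range (n+1), gaussIter ρ i ∧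
      ∏ i ∈ Finset.range (n+1), gaussIter ρ i < 1 := by
  induction n with
  | zero =>
    rw [Finset.prod_range_one]
    exact gauss_pos hρ 0
  | succ m ih =>
    rw [Finset.prod_range_succ]
    obtain ⟨h1, h2⟩ := gauss_pos hρ (m+1)
    constructor
    · exact mul_pos ih.1 h1
    · nlinarith [ih.1, ih.2]

lemma abs_th (hρ : Irrational ρ) (n : ℕ) :
    |th ρ n| = ∏ i ∈ Finset.range (n+1), gaussIter ρ i := by
  rw [th_prod hρ n, abs_mul, abs_pow, abs_neg, abs_one, one_pow, one_mul,
    abs_of_pos (prodx_mem hρ n).1]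

lemma th_pos_abs (hρ : Irrational ρ) (n : ℕ) : 0 < |th ρ n| := by
  rw [abs_th hρ]; exact (prodx_mem hρ n).1

lemma th_ne (hρ : Irrational ρ) (n : ℕ) : th ρ n ≠ 0 := by
  intro h
  have := th_pos_abs hρ n
  rw [h] at this; simp at this

lemma th_lt_one (hρ : Irrational ρ) (n : ℕ) : |th ρ n| < 1 := by
  rw [abs_th hρ]; exact (prodx_mem hρ n).2

lemma th_alt (hρ : Irrational ρ) (n : ℕ) : th ρ n * th ρ (n+1) < 0 := by
  rw [th_prod hρ n, th_prod hρ (n+1)]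
  have h1 := (prodx_mem hρ n).1
  have h2 := (prodx_mem hρ (n+1)).1
  have : (-1:ℝ)^n * (-1:ℝ)^(n+1) = -1 := by
    rw [← pow_add]
    have : Odd (n + (n+1)) := by exact ⟨n, by ring⟩
    rw [this.neg_one_pow]
  have h3 : ((-1:ℝ)^n * ∏ i ∈ Finset.range (n+1), gaussIter ρ i) *
      ((-1:ℝ)^(n+1) * ∏ i ∈ Finset.range (n+1+1), gaussIter ρ i)
      = ((-1:ℝ)^n * (-1:ℝ)^(n+1)) *
        ((∏ i ∈ Finset.range (n+1), gaussIter ρ i) * ∏ i ∈ Finset.range (n+1+1), gaussIter ρ i) := by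
    ring
  rw [h3, this]
  nlinarith [mul_pos h1 h2]

lemma abs_th_succ (hρ : Irrational ρ) (n : ℕ) :
    |th ρ (n+1)| = |th ρ n| * gaussIter ρ (n+1) := by
  rw [abs_th hρ, abs_th hρ, Finset.prod_range_succ]

lemma th_rec (n : ℕ) :
    th ρ (n+2) = (cfA ρ (n+2) : ℝ) * th ρ (n+1) + th ρ n := by
  have hrecQ : (cfQ ρ (n+2) : ℝ) = (cfA ρ (n+2) : ℝ) * cfQ ρ (n+1) + cfQ ρ n := by
    have h : cfQ ρ (n+2) = cfA ρ (n+2) * cfQ ρ (n+1) + cfQ ρ n := rfl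
    exact_mod_cast congrArg (fun z : ℕ => (z:ℝ)) h
  have hrecP : (cfP ρ (n+2) : ℝ) = (cfA ρ (n+2) : ℝ) * cfP ρ (n+1) + cfP ρ n := by
    have h : cfP ρ (n+2) = (cfA ρ (n+2) : ℤ) * cfP ρ (n+1) + cfP ρ n := rfl
    push_cast [h]; ring
  simp only [th, hrecQ, hrecP]; ring

lemma det (n : ℕ) :
    (cfQ ρ (n+1) : ℤ) * cfP ρ n - (cfQ ρ n : ℤ) * cfP ρ (n+1) = (-1)^(n+1) := by
  induction n with
  | zero =>
    have h1 : cfQ ρ 1 = cfA ρ 1 := rfl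
    have h2 : cfQ ρ 0 = 1 := rfl
    have h3 : cfP ρ 0 = ⌊ρ⌋ := rfl
    have h4 : cfP ρ 1 = (cfA ρ 1 : ℤ) * ⌊ρ⌋ + 1 := rfl
    rw [h1, h2, h3, h4]; push_cast; ring
  | succ n ih =>
    have h1 : cfQ ρ (n+2) = cfA ρ (n+2) * cfQ ρ (n+1) + cfQ ρ n := rfl
    have h2 : cfP ρ (n+2) = (cfA ρ (n+2) : ℤ) * cfP ρ (n+1) + cfP ρ n := rfl
    have h1' : (cfQ ρ (n+2) : ℤ) = (cfA ρ (n+2) : ℤ) * cfQ ρ (n+1) + cfQ ρ n := by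
      exact_mod_cast congrArg (fun z : ℕ => (z:ℤ)) h1
    rw [h1', h2]
    have : ((-1:ℤ))^(n+2) = -(-1)^(n+1) := by ring
    rw [this]
    linear_combination -ih

lemma sqrt_abs_le {A B : ℝ} (h : 0 ≤ A * B) : |A| ≤ |A + B| := by
  have h2 : A^2 ≤ (A+B)^2 := by nlinarith [sq_nonneg B]
  calc |A| = Real.sqrt (A^2) := (Real.sqrt_sq_eq_abs A).symm
    _ ≤ Real.sqrt ((A+B)^2) := Real.sqrt_le_sqrt h2
    _ = |A + B| := Real.sqrt_sq_eq_abs _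

/-- Best approximation property. -/
lemma best_approx (hρ : Irrational ρ) (n : ℕ) (m b : ℤ)
    (hm : 0 < m) (hmq : m < (cfQ ρ (n+1) : ℤ)) :
    |th ρ n| ≤ |(m:ℝ) * ρ - b| := by
  have hQ0 : 1 ≤ (cfQ ρ n : ℤ) := by exact_mod_cast cfQ_pos hρ n
  have hQ1 : 1 ≤ (cfQ ρ (n+1) : ℤ) := by exact_mod_cast cfQ_pos hρ (n+1)
  set Q0 : ℤ := (cfQ ρ n : ℤ) with hQ0d
  set Q1 : ℤ := (cfQ ρ (n+1) : ℤ) with hQ1d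
  set P0 : ℤ := cfP ρ n with hP0d
  set P1 : ℤ := cfP ρ (n+1) with hP1d
  have hdet : Q1 * P0 - Q0 * P1 = (-1)^(n+1) := det n
  have hd2 : (Q0 * P1 - Q1 * P0) * (Q0 * P1 - Q1 * P0) = 1 := by
    have : Q0 * P1 - Q1 * P0 = -(-1)^(n+1) := by linarith
    rw [this]
    have : ((-1:ℤ))^(n+1) * (-1)^(n+1) = 1 := by
      rw [← mul_pow]; norm_num
    linarith [this]
  have key1 : ((m * P1 - b * Q1) * (Q0 * P1 - Q1 * P0)) * Q0
      + ((b * Q0 - m * P0) * (Q0 * P1 - Q1 * P0)) * Q1 = m := by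
    linear_combination m * hd2
  have key2 : ((m * P1 - b * Q1) * (Q0 * P1 - Q1 * P0)) * P0
      + ((b * Q0 - m * P0) * (Q0 * P1 - Q1 * P0)) * P1 = b := by
    linear_combination b * hd2
  set μ : ℤ := (m * P1 - b * Q1) * (Q0 * P1 - Q1 * P0) with hμd
  set ν : ℤ := (b * Q0 - m * P0) * (Q0 * P1 - Q1 * P0) with hνd
  have hthn : th ρ n = ((Q0:ℤ):ℝ) * ρ - ((P0:ℤ):ℝ) := by
    rw [hQ0d, hP0d]; simp only [th]; push_cast; ring
  have hthn1 : th ρ (n+1) = ((Q1:ℤ):ℝ) * ρ - ((P1:ℤ):ℝ) := by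
    rw [hQ1d, hP1d]; simp only [th]; push_cast; ring
  have key3 : (m:ℝ) * ρ - b = (μ:ℝ) * th ρ n + (ν:ℝ) * th ρ (n+1) := by
    have c1 : ((μ:ℤ):ℝ) * ((Q0:ℤ):ℝ) + ((ν:ℤ):ℝ) * ((Q1:ℤ):ℝ) = ((m:ℤ):ℝ) := by
      exact_mod_cast congrArg (fun z : ℤ => (z:ℝ)) key1
    have c2 : ((μ:ℤ):ℝ) * ((P0:ℤ):ℝ) + ((ν:ℤ):ℝ) * ((P1:ℤ):ℝ) = ((b:ℤ):ℝ) := by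
      exact_mod_cast congrArg (fun z : ℤ => (z:ℝ)) key2
    rw [hthn, hthn1]
    linear_combination -ρ * c1 + c2
  by_cases hν : ν = 0
  · have hμ : μ ≠ 0 := by
      intro h
      rw [h, hν] at key1
      simp at key1
      omega
    have h1 : (1:ℝ) ≤ |(μ:ℝ)| := by
      have := Int.one_le_abs hμ
      calc (1:ℝ) = ((1:ℤ):ℝ) := by norm_num
        _ ≤ ((|μ|:ℤ):ℝ) := by exact_mod_cast this
        _ = |(μ:ℝ)| := by push_cast; ring
    rw [key3, hν]
    push_cast
    rw [zero_mul, add_zero, abs_mul]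
    nlinarith [th_pos_abs hρ n, h1, abs_nonneg (th ρ n)]
  · by_cases hμ : μ = 0
    · exfalso
      rw [hμ] at key1
      simp at key1
      rcases lt_trichotomy ν 0 with h | h | h
      · nlinarith
      · exact hν h
      · nlinarith
    · -- both nonzero: opposite signs
      have hμν : μ * ν < 0 := by
        rcases lt_trichotomy μ 0 with h1 | h1 | h1
        · rcases lt_trichotomy ν 0 with h2 | h2 | h2
          · exfalso; nlinarith
          · exact absurd h2 hν
          · nlinarith
        · exact absurd h1 hμ
        · rcases lt_trichotomy ν 0 with h2 | h2 | h2
          · nlinarith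
          · exact absurd h2 hν
          · exfalso; nlinarith
      have halt := th_alt hρ n
      have hsame : 0 ≤ ((μ:ℝ) * th ρ n) * ((ν:ℝ) * th ρ (n+1)) := by
        have : ((μ:ℝ)) * (ν:ℝ) < 0 := by exact_mod_cast hμν
        nlinarith
      have h1 : (1:ℝ) ≤ |(μ:ℝ)| := by
        have := Int.one_le_abs hμ
        calc (1:ℝ) = ((1:ℤ):ℝ) := by norm_num
          _ ≤ ((|μ|:ℤ):ℝ) := by exact_mod_cast this
          _ = |(μ:ℝ)| := by push_cast; ring
      rw [key3]
      calc |th ρ n| ≤ |(μ:ℝ)| * |th ρ n| := by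
            nlinarith [abs_nonneg (th ρ n)]
        _ = |(μ:ℝ) * th ρ n| := (abs_mul _ _).symm
        _ ≤ |(μ:ℝ) * th ρ n + (ν:ℝ) * th ρ (n+1)| := sqrt_abs_le hsame

lemma gauss_gt (hρ : Irrational ρ) (n : ℕ) :
    1 / ((cfA ρ (n+1) : ℝ) + 1) < gaussIter ρ n := by
  have h1 : (gaussIter ρ n)⁻¹ < (cfA ρ (n+1) : ℝ) + 1 := by
    have h2 : (gaussIter ρ n)⁻¹ < ⌊(gaussIter ρ n)⁻¹⌋₊ + 1 := Nat.lt_floor_add_one _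
    have h3 : cfA ρ (n+1) = ⌊(gaussIter ρ n)⁻¹⌋₊ := by simp [cfA]
    rw [h3]; exact_mod_cast h2
  have hp := (gauss_pos hρ n).1
  have hA : (0:ℝ) < (cfA ρ (n+1) : ℝ) + 1 := by positivity
  rw [div_lt_iff₀ hA]
  have := (inv_lt_iff_one_lt_mul₀ hp).1 h1
  nlinarith [this]

end CFaux


namespace CDaux

variable {f : CircleDeg1Lift}

lemma tau_pow (m : ℕ) : (f ^ m).translationNumber = (m : ℝ) * rot f :=
  f.translationNumber_pow m

lemma rot_pow_irrational (hirr : Irrational (rot f)) {m : ℕ} (hm : m ≠ 0) :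
    Irrational ((m:ℝ) * rot f) := hirr.natCast_mul hm

/-- Order lemma: `f^m x < x + b ↔ m ρ < b`. -/
lemma ordLT (hirr : Irrational (rot f)) (m : ℕ) (b : ℤ) (x : ℝ) :
    (f ^ m) x < x + b ↔ (m:ℝ) * rot f < b := by
  rcases Nat.eq_zero_or_pos m with hm | hm
  · subst hm
    have hx : (f ^ 0) x = x := by rw [pow_zero]; rfl
    rw [hx]
    simp only [Nat.cast_zero, zero_mul]
    constructor <;> intro <;> linarith
  · have hir : Irrational ((m:ℝ) * rot f) := rot_pow_irrational hirr (Nat.pos_iff_ne_zero.1 hm)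
    constructor
    · intro h
      by_contra hc
      push_neg at hc
      rcases lt_or_eq_of_le hc with h2 | h2
      · have := (f ^ m).lt_map_of_int_lt_translationNumber (by rw [tau_pow]; exact h2) x
        linarith
      · exact hir (h2 ▸ ⟨b, rfl⟩)
    · intro h
      exact (f ^ m).map_lt_of_translationNumber_lt_int (by rw [tau_pow]; exact h) x

/-- Order lemma reversed: `x + b < f^m x ↔ b < m ρ`. -/
lemma ordGT (hirr : Irrational (rot f)) (m : ℕ) (b : ℤ) (x : ℝ) :
    x + b < (f ^ m) x ↔ (b:ℝ) < (m:ℝ) * rot f := by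
  rcases Nat.eq_zero_or_pos m with hm | hm
  · subst hm
    have hx : (f ^ 0) x = x := by rw [pow_zero]; rfl
    rw [hx]
    simp only [Nat.cast_zero, zero_mul]
    constructor <;> intro <;> linarith
  · have hir : Irrational ((m:ℝ) * rot f) := rot_pow_irrational hirr (Nat.pos_iff_ne_zero.1 hm)
    constructor
    · intro h
      by_contra hc
      push_neg at hc
      rcases lt_or_eq_of_le hc with h2 | h2
      · have := (f ^ m).map_lt_of_translationNumber_lt_int (by rw [tau_pow]; exact h2) x
        linarith
      · exact hir (h2.symm ▸ ⟨b, rfl⟩)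
    · intro h
      exact (f ^ m).lt_map_of_int_lt_translationNumber (by rw [tau_pow]; exact h) x

lemma pow_apply_add (i j : ℕ) (x : ℝ) : (f ^ (i + j)) x = (f ^ i) ((f ^ j) x) := by
  simp only [CircleDeg1Lift.coe_pow]
  exact Function.iterate_add_apply _ i j x

lemma map_sub_int (g : CircleDeg1Lift) (x : ℝ) (b : ℤ) : g (x - b) = g x - b := by
  have h := g.map_add_int x (-b)
  rw [Int.cast_neg] at h
  rw [sub_eq_add_neg, sub_eq_add_neg]
  exact h

/-- Master comparison: order of orbit points matches order of rotation points. -/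
lemma cmp_lt (hirr : Irrational (rot f)) (i i' : ℕ) (b b' : ℤ) (x : ℝ) :
    (f ^ i) x - b < (f ^ i') x - b' ↔ (i:ℝ) * rot f - b < (i':ℝ) * rot f - b' := by
  rcases le_total i i' with h | h
  · obtain ⟨m, rfl⟩ : ∃ m, i' = m + i := ⟨i' - i, by omega⟩
    rw [pow_apply_add m i x]
    set y := (f ^ i) x
    have h1 : (f ^ i) x - b < (f ^ m) y - b' ↔ y + (b' - b : ℤ) < (f ^ m) y := by
      push_cast
      constructor <;> intro <;> linarith
    rw [h1, ordGT hirr m (b' - b) y]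
    push_cast
    constructor <;> intro <;> linarith
  · obtain ⟨m, rfl⟩ : ∃ m, i = m + i' := ⟨i - i', by omega⟩
    rw [pow_apply_add m i' x]
    set y := (f ^ i') x
    have h1 : (f ^ m) y - b < y - b' ↔ (f ^ m) y < y + (b - b' : ℤ) := by
      push_cast
      constructor <;> intro <;> linarith
    rw [h1, ordLT hirr m (b - b') y]
    push_cast
    constructor <;> intro <;> linarith

lemma cmp_le (hirr : Irrational (rot f)) (i i' : ℕ) (b b' : ℤ) (x : ℝ) :
    (f ^ i) x - b ≤ (f ^ i') x - b' ↔ (i:ℝ) * rot f - b ≤ (i':ℝ) * rot f - b' := by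
  rw [← not_lt, ← not_lt, not_iff_not]
  exact cmp_lt hirr i' i b' b x

end CDaux


namespace GEOaux

lemma circProj_add_int (x : ℝ) (t : ℤ) : circProj (x + t) = circProj x := by
  show QuotientAddGroup.mk _ = QuotientAddGroup.mk _
  rw [QuotientAddGroup.eq_iff_sub_mem]
  have h : x + (t:ℝ) - x = (t:ℝ) := by ring
  rw [h]
  exact ⟨t, by simp⟩

lemma circProj_eq_iff {x y : ℝ} : circProj x = circProj y ↔ ∃ t : ℤ, y = x + t := by
  show QuotientAddGroup.mk _ = QuotientAddGroup.mk _ ↔ _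
  rw [QuotientAddGroup.eq_iff_sub_mem]
  constructor
  · rintro ⟨t, ht⟩
    refine ⟨-t, ?_⟩
    have ht' : (t:ℝ) = x - y := by simpa using ht
    push_cast
    linarith
  · rintro ⟨t, rfl⟩
    refine ⟨-t, ?_⟩
    simp

/-- Monotone continuous image of a closed interval. -/
lemma image_uIcc {g : ℝ → ℝ} (hm : Monotone g) (hc : Continuous g) (a b : ℝ) :
    g '' Set.uIcc a b = Set.uIcc (g a) (g b) := by
  rcases le_total a b with h | h
  · rw [Set.uIcc_of_le h, Set.uIcc_of_le (hm h)]
    apply Set.Subset.antisymm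
    · rintro y ⟨x, hx, rfl⟩
      exact ⟨hm hx.1, hm hx.2⟩
    · exact intermediate_value_Icc h hc.continuousOn
  · rw [Set.uIcc_of_ge h, Set.uIcc_of_ge (hm h)]
    apply Set.Subset.antisymm
    · rintro y ⟨x, hx, rfl⟩
      exact ⟨hm hx.1, hm hx.2⟩
    · exact intermediate_value_Icc h hc.continuousOn

/-- If an interval projects into another (short) interval on the circle,
then some integer translate is included in it. -/
lemma wrap {A B α β : ℝ} (hAB : A ≤ B) (hlen : B - A < 1) (hab : α ≤ β) (hblen : β - α < 1)
    (hsub : circProj '' Set.Icc α β ⊆ circProj '' Set.Icc A B) :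
    ∃ t : ℤ, ∀ z ∈ Set.Icc α β, z + t ∈ Set.Icc A B := by
  have hex : ∀ z ∈ Set.Icc α β, ∃ t : ℤ, z + t ∈ Set.Icc A B := by
    intro z hz
    obtain ⟨w, hw, hwz⟩ := hsub ⟨z, hz, rfl⟩
    obtain ⟨t, rfl⟩ := circProj_eq_iff.1 hwz.symm
    exact ⟨t, hw⟩
  obtain ⟨t₀, ht₀⟩ := hex α ⟨le_refl _, hab⟩
  refine ⟨t₀, ?_⟩
  by_contra hcon
  push_neg at hcon
  obtain ⟨z₀, hz₀, hz₀out⟩ := hcon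
  obtain ⟨t₁, ht₁⟩ := hex z₀ hz₀
  have htne : t₁ ≠ t₀ := by
    intro h; rw [h] at ht₁; exact hz₀out ht₁
  -- t₁ = t₀ - 1
  have ht1eq : t₁ = t₀ - 1 := by
    have h1 : A ≤ α + t₀ := ht₀.1
    have h2 : α + t₀ ≤ B := ht₀.2
    have h3 : A ≤ z₀ + t₁ := ht₁.1
    have h4 : z₀ + t₁ ≤ B := ht₁.2
    have h5 : α ≤ z₀ := hz₀.1
    have h6 : z₀ + t₀ ∉ Set.Icc A B := hz₀out
    have h7 : (t₁ : ℝ) < t₀ + 1 := by nlinarith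
    have h8 : (t₀ : ℝ) - 2 < t₁ := by linarith [hz₀.2]
    have h9 : t₁ < t₀ + 1 := by exact_mod_cast h7
    have h10 : t₀ - 2 < t₁ := by exact_mod_cast h8
    omega
  -- now find ζ ∈ (B, A+1) of the form w + t₀ with w ∈ [α, z₀]
  have hz₀t : B < z₀ + t₀ := by
    have := ht₁.1
    rw [ht1eq] at this
    push_cast at this
    by_contra hc
    push_neg at hc
    exact hz₀out ⟨by linarith [ht₀.1, hz₀.1], hc⟩
  set ζ : ℝ := (B + min (A + 1) (z₀ + t₀)) / 2 with hζ
  have hζ1 : B < ζ := by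
    have : B < min (A + 1) (z₀ + t₀) := lt_min (by linarith) hz₀t
    rw [hζ]; linarith [this]
  have hζ2 : ζ < A + 1 := by
    have : min (A + 1) (z₀ + t₀) ≤ A + 1 := min_le_left _ _
    rw [hζ]; linarith
  have hζ3 : ζ < z₀ + t₀ := by
    have : min (A + 1) (z₀ + t₀) ≤ z₀ + t₀ := min_le_right _ _
    rw [hζ]; linarith
  set w : ℝ := ζ - t₀ with hw
  have hwmem : w ∈ Set.Icc α β := by
    constructor
    · have : α + t₀ ≤ B := ht₀.2
      rw [hw]; linarith
    · have : w < z₀ := by rw [hw]; linarith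
      linarith [hz₀.2, this]
  obtain ⟨s, hs⟩ := hex w hwmem
  have hwt : w + (t₀:ℝ) = ζ := by rw [hw]; ring
  have hsne : s ≠ t₀ := by
    intro h
    rw [h] at hs
    rw [hwt] at hs
    rcases hs with ⟨_, h2⟩
    linarith
  rcases lt_or_gt_of_ne hsne with h | h
  · have : (s:ℝ) ≤ t₀ - 1 := by exact_mod_cast Int.le_sub_one_of_lt h
    have := hs.1
    linarith [hζ2]
  · have : (t₀:ℝ) + 1 ≤ s := by exact_mod_cast h
    have := hs.2
    linarith [hζ1]

/-- Telescoping sum over `Icc (k+1) m`. -/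
lemma telescope (v : ℕ → ℝ) (k : ℕ) :
    ∀ m, k ≤ m → ∑ j ∈ Finset.Icc (k+1) m, (v j - v (j-1)) = v m - v k := by
  intro m
  induction m with
  | zero =>
    intro h
    interval_cases k
    simp
  | succ m ih =>
    intro h
    rcases Nat.lt_or_ge k (m+1) with h2 | h2
    · have hk : k ≤ m := by omega
      rw [Finset.sum_Icc_succ_top (by omega : k + 1 ≤ m + 1), ih hk]
      simp only [Nat.add_sub_cancel]
      ring
    · have : k = m + 1 := by omega
      subst this
      simp

/-- Core counting argument: a decreasing chain `w 0 > w 1 > ... > w a > P0` of interval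
endpoints, an interval `[α,β]` inside `[P0, w 0]` avoiding the open intervals indexed by `S`;
then some interval of `S` is short. -/
lemma core (a : ℕ) (ha : 2 ≤ a) (w : ℕ → ℝ) (P0 α β : ℝ) (S : Finset ℕ)
    (hchain : ∀ i j : ℕ, i < j → j ≤ a → w j < w i)
    (hP0 : P0 < w a)
    (hα : P0 ≤ α) (hαβ : α < β) (hβ : β ≤ w 0)
    (hS : ∀ j ∈ S, 1 ≤ j ∧ j ≤ a) (hcard : a - 1 ≤ S.card)
    (hdisj : ∀ j ∈ S, β ≤ w j ∨ w (j-1) ≤ α) :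
    ∃ j₀ ∈ S, ((a:ℝ) - 1) * (w (j₀-1) - w j₀) ≤ (w 0 - P0) - (β - α) := by
  have hne : S.Nonempty := Finset.card_pos.1 (by omega)
  obtain ⟨j₀, hj₀S, hmin⟩ := S.exists_min_image (fun j => w (j-1) - w j) hne
  refine ⟨j₀, hj₀S, ?_⟩
  have hterm_nonneg : ∀ j : ℕ, 1 ≤ j → j ≤ a → 0 ≤ w (j-1) - w j := by
    intro j h1 h2
    have := hchain (j-1) j (by omega) h2
    linarith
  -- sum bound
  have hsum : ∑ j ∈ S, (w (j-1) - w j) ≤ (w 0 - P0) - (β - α) := by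
    classical
    set v : ℕ → ℝ := fun j => -w j with hv
    have htel : ∀ k M : ℕ, k ≤ M → ∑ j ∈ Finset.Icc (k+1) M, (w (j-1) - w j) = w k - w M := by
      intro k M hkM
      have := telescope v k M hkM
      simp only [hv] at this
      have h2 : ∑ j ∈ Finset.Icc (k+1) M, (w (j-1) - w j) = ∑ j ∈ Finset.Icc (k+1) M, (-w j - -w (j-1)) := by
        apply Finset.sum_congr rfl
        intro j _
        ring
      rw [h2, this]
      ring
    set S₁ : Finset ℕ := S.filter (fun j => w (j-1) ≤ α) with hS₁
    set S₂ : Finset ℕ := S.filter (fun j => ¬ (w (j-1) ≤ α)) with hS₂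
    have hsplit : ∑ j ∈ S, (w (j-1) - w j) =
        ∑ j ∈ S₁, (w (j-1) - w j) + ∑ j ∈ S₂, (w (j-1) - w j) :=
      (Finset.sum_filter_add_sum_filter_not S _ _).symm
    have hb1 : ∑ j ∈ S₁, (w (j-1) - w j) ≤ α - P0 := by
      rcases Finset.eq_empty_or_nonempty S₁ with h | h
      · rw [h, Finset.sum_empty]; linarith
      · set m := S₁.min' h with hm
        have hmS : m ∈ S₁ := S₁.min'_mem h
        have hmS' : m ∈ S := Finset.mem_of_mem_filter m hmS
        have hm1 : 1 ≤ m := (hS m hmS').1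
        have hma : m ≤ a := (hS m hmS').2
        have hsub : S₁ ⊆ Finset.Icc ((m-1)+1) a := by
          intro j hj
          have hjS := Finset.mem_of_mem_filter j hj
          rw [Finset.mem_Icc]
          exact ⟨by have := S₁.min'_le j hj; omega, (hS j hjS).2⟩
        calc ∑ j ∈ S₁, (w (j-1) - w j)
            ≤ ∑ j ∈ Finset.Icc ((m-1)+1) a, (w (j-1) - w j) := by
              apply Finset.sum_le_sum_of_subset_of_nonneg hsub
              intro j hj _
              rw [Finset.mem_Icc] at hj
              exact hterm_nonneg j (by omega) hj.2
          _ = w (m-1) - w a := htel (m-1) a (by omega)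
          _ ≤ α - P0 := by
              have h1 : w (m-1) ≤ α := (Finset.mem_filter.1 hmS).2
              linarith
    have hb2 : ∑ j ∈ S₂, (w (j-1) - w j) ≤ w 0 - β := by
      rcases Finset.eq_empty_or_nonempty S₂ with h | h
      · rw [h, Finset.sum_empty]; linarith
      · set M := S₂.max' h with hM
        have hMS : M ∈ S₂ := S₂.max'_mem h
        have hMS' : M ∈ S := Finset.mem_of_mem_filter M hMS
        have hMa : M ≤ a := (hS M hMS').2
        have hsub : S₂ ⊆ Finset.Icc (0+1) M := by
          intro j hj
          have hjS := Finset.mem_of_mem_filter j hj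
          rw [Finset.mem_Icc]
          exact ⟨(hS j hjS).1, S₂.le_max' j hj⟩
        have hwM : β ≤ w M := by
          rcases hdisj M hMS' with h2 | h2
          · exact h2
          · exact absurd h2 (Finset.mem_filter.1 hMS).2
        calc ∑ j ∈ S₂, (w (j-1) - w j)
            ≤ ∑ j ∈ Finset.Icc (0+1) M, (w (j-1) - w j) := by
              apply Finset.sum_le_sum_of_subset_of_nonneg hsub
              intro j hj _
              rw [Finset.mem_Icc] at hj
              exact hterm_nonneg j hj.1 (le_trans hj.2 hMa)
          _ = w 0 - w M := htel 0 M (Nat.zero_le M)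
          _ ≤ w 0 - β := by linarith
    rw [hsplit]
    linarith
  -- minimum times card
  have hj1 : 1 ≤ j₀ := (hS j₀ hj₀S).1
  have hja : j₀ ≤ a := (hS j₀ hj₀S).2
  have hminpos : 0 ≤ w (j₀-1) - w j₀ := hterm_nonneg j₀ hj1 hja
  have hcardsum : (S.card : ℝ) * (w (j₀-1) - w j₀) ≤ ∑ j ∈ S, (w (j-1) - w j) := by
    have := Finset.card_nsmul_le_sum S (fun j => w (j-1) - w j) (w (j₀-1) - w j₀)
      (fun j hj => hmin j hj)
    simpa [nsmul_eq_mul] using this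
  have hcard' : ((a:ℝ) - 1) ≤ (S.card : ℝ) := by
    have : ((a - 1 : ℕ) : ℝ) ≤ (S.card : ℝ) := by exact_mod_cast hcard
    have h2 : ((a - 1 : ℕ) : ℝ) = (a:ℝ) - 1 := by
      have : 1 ≤ a := by omega
      push_cast [Nat.cast_sub this]
      ring
    linarith [h2 ▸ this]
  calc ((a:ℝ) - 1) * (w (j₀-1) - w j₀) ≤ (S.card : ℝ) * (w (j₀-1) - w j₀) := by
        apply mul_le_mul_of_nonneg_right hcard' hminpos
    _ ≤ ∑ j ∈ S, (w (j-1) - w j) := hcardsum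
    _ ≤ (w 0 - P0) - (β - α) := hsum

end GEOaux



namespace MORE
open CFaux CDaux GEOaux

variable {ρ : ℝ}

lemma cfQ_rec {n : ℕ} (hn : 1 ≤ n) :
    cfQ ρ (n+1) = cfA ρ (n+1) * cfQ ρ n + cfQ ρ (n-1) := by
  obtain ⟨m, rfl⟩ : ∃ m, n = m + 1 := ⟨n - 1, by omega⟩
  simp only [Nat.add_sub_cancel]
  rfl

lemma th_rec' {n : ℕ} (hn : 1 ≤ n) :
    th ρ (n+1) = (cfA ρ (n+1) : ℝ) * th ρ n + th ρ (n-1) := by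
  obtain ⟨m, rfl⟩ : ∃ m, n = m + 1 := ⟨n - 1, by omega⟩
  simp only [Nat.add_sub_cancel]
  exact th_rec m

lemma th_alt' (hρ : Irrational ρ) {n : ℕ} (hn : 1 ≤ n) :
    th ρ (n-1) * th ρ n < 0 := by
  have h := th_alt hρ (n-1)
  rwa [Nat.sub_add_cancel hn] at h

lemma abs_th_succ' (hρ : Irrational ρ) {n : ℕ} (hn : 1 ≤ n) :
    |th ρ n| = |th ρ (n-1)| * gaussIter ρ n := by
  have h := abs_th_succ hρ (n-1)
  rwa [Nat.sub_add_cancel hn] at h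

lemma pow_continuous {f : CircleDeg1Lift} (hcont : Continuous ⇑f) (l : ℕ) :
    Continuous ⇑(f ^ l) := by
  rw [CircleDeg1Lift.coe_pow]
  exact hcont.iterate l

lemma dynEnd_eq (f : CircleDeg1Lift) (p : ℝ) (m : ℕ) :
    dynEnd f p m = (f ^ cfQ (rot f) m) p - (cfP (rot f) m : ℝ) := rfl

lemma map_dynEnd (f : CircleDeg1Lift) (p : ℝ) (m l : ℕ) :
    (f ^ l) (dynEnd f p m) = (f ^ (l + cfQ (rot f) m)) p - (cfP (rot f) m : ℝ) := by
  rw [dynEnd_eq, map_sub_int (f ^ l) _ _, ← pow_apply_add l (cfQ (rot f) m) p]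

lemma dynLen_eq (f : CircleDeg1Lift) (p : ℝ) (m l : ℕ) :
    dynLen f p m l = |(f ^ (l + cfQ (rot f) m)) p - (cfP (rot f) m : ℝ) - (f ^ l) p| := by
  rw [dynLen, map_dynEnd]

lemma dynArc_eq {f : CircleDeg1Lift} (hcont : Continuous ⇑f) (p : ℝ) (m l : ℕ) :
    dynArc f p m l =
      Set.uIcc ((f ^ l) p) ((f ^ (l + cfQ (rot f) m)) p - (cfP (rot f) m : ℝ)) := by
  rw [dynArc, image_uIcc (f ^ l).monotone (pow_continuous hcont l), map_dynEnd]

lemma numeric_final {aR γ r L D X : ℝ} (hr0 : 0 < r) (hr1 : r < 1) (hγ : 1 - r < γ)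
    (ha2 : 2 ≤ aR) (hceil2 : (γ + 1) / (γ - (1 - r)) + 2 ≤ aR)
    (hlenb : (aR - 1) * L ≤ (1 - r) * D)
    (hD : 0 < D) (hL : 0 ≤ L) (hX : 0 < X) (hXgt : 1 / (aR + 1) < X) :
    L ≤ γ * X * D := by
  have hγδ : 0 < γ - (1 - r) := by linarith
  have hγ0 : 0 < γ := by linarith
  have h2 : γ + 1 ≤ (aR - 2) * (γ - (1 - r)) := by
    have h0 : (γ + 1) / (γ - (1 - r)) ≤ aR - 2 := by linarith
    rw [div_le_iff₀ hγδ] at h0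
    linarith
  have hF2 : (1 - r) * (aR + 1) ≤ γ * (aR - 1) := by nlinarith
  have hXa : 1 < X * (aR + 1) := by
    rw [div_lt_iff₀ (by linarith : (0:ℝ) < aR + 1)] at hXgt
    linarith
  have p1 : (aR-1) * L * (aR+1) ≤ (1-r) * D * (aR+1) :=
    mul_le_mul_of_nonneg_right hlenb (by linarith)
  have p2 : (1-r) * D * (aR+1) ≤ γ * (aR-1) * D := by
    calc (1-r) * D * (aR+1) = ((1-r) * (aR+1)) * D := by ring
      _ ≤ (γ * (aR-1)) * D := mul_le_mul_of_nonneg_right hF2 hD.le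
      _ = γ * (aR-1) * D := by ring
  have p3 : γ * (aR-1) * D ≤ γ * (aR-1) * D * (X * (aR+1)) := by
    apply le_mul_of_one_le_right ?_ hXa.le
    apply mul_nonneg (mul_nonneg hγ0.le (by linarith)) hD.le
  have p5 : (0:ℝ) < (aR-1) * (aR+1) := mul_pos (by linarith) (by linarith)
  have p4 : L * ((aR-1) * (aR+1)) ≤ (γ * X * D) * ((aR-1) * (aR+1)) := by nlinarith [p1, p2, p3]
  exact le_of_mul_le_mul_right p4 p5

end MORE


set_option maxHeartbeats 3000000 in
/-- **Corollary (definite contraction for large partial quotients).** Suppose `r ∈ (0,1)`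
is such that for every `f ∈ B^{2+}_irr(p,c)` and large `n`, each `Δ_{n−1}^k` contains a
subarc `Δ_n^l` with `|Δ_n^l| ≥ r|Δ_{n−1}^k|`. Then for every `γ > 1 − r` there is
`A = A(c,γ)` such that for every `f ∈ B^{2+}_irr(p,c)` and all large `n` with `a_{n+1} ≥ A`,
each `Δ_{n−1}^k` contains a subarc `Δ_n^l` with
`|Δ_n^l|/|Δ_{n−1}^k| ≤ γ·μ(Δ_n^l)/μ(Δ_{n−1}^k)` (and `μ(Δ_n^l) = μ_n`, `μ(Δ_{n−1}^k) = μ_{n−1}`). -/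
theorem short_subinterval_of_long (c : ℝ) (hc : 0 < c) (hc1 : c ≠ 1)
    (r : ℝ) (hr : r ∈ Set.Ioo (0:ℝ) 1)
    (hlong : ∀ (p : ℝ) (f : CircleDeg1Lift),
      BreakClass2Plus f p c → Irrational (rot f) →
      ∃ N : ℕ, 1 ≤ N ∧ ∀ n : ℕ, N ≤ n → ∀ k < cfQ (rot f) n,
        ∃ l < cfQ (rot f) (n+1),
          arcSubset (dynArc f p n l) (dynArc f p (n-1) k) ∧
          r * dynLen f p (n-1) k ≤ dynLen f p n l) :
    ∀ γ : ℝ, 1 - r < γ →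
      ∃ A : ℕ, ∀ (p : ℝ) (f : CircleDeg1Lift),
        BreakClass2Plus f p c → Irrational (rot f) →
        ∃ N : ℕ, 1 ≤ N ∧ ∀ n : ℕ, N ≤ n → A ≤ cfA (rot f) (n+1) →
          ∀ k < cfQ (rot f) n, ∃ l < cfQ (rot f) (n+1),
            arcSubset (dynArc f p n l) (dynArc f p (n-1) k) ∧
            dynLen f p n l / dynLen f p (n-1) k ≤
              γ * (cfMu (rot f) n / cfMu (rot f) (n-1)) := by
  obtain ⟨hr0, hr1⟩ := hr
  intro γ hγ
  have hγ0 : 0 < γ := by linarith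
  have hγδ : 0 < γ - (1 - r) := by linarith
  refine ⟨⌈(γ + 1) / (γ - (1 - r))⌉₊ + 2, ?_⟩
  intro p f hf hirrf
  obtain ⟨N₀, hN₀1, hN₀⟩ := hlong p f hf hirrf
  refine ⟨max N₀ 1, le_max_right _ _, ?_⟩
  intro n hn hAa k hk
  have hn1 : 1 ≤ n := le_trans (le_max_right N₀ 1) hn
  have hcont : Continuous ⇑f := hf.1.2.1
  set ρ : ℝ := rot f with hρd
  have hρ : Irrational ρ := hirrf
  -- continued fraction abbreviations
  have hQrec : cfQ ρ (n+1) = cfA ρ (n+1) * cfQ ρ n + cfQ ρ (n-1) := MORE.cfQ_rec hn1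
  have hθrec : CFaux.th ρ (n+1)
      = (cfA ρ (n+1) : ℝ) * CFaux.th ρ n + CFaux.th ρ (n-1) := MORE.th_rec' hn1
  have halt1 : CFaux.th ρ (n-1) * CFaux.th ρ n < 0 := MORE.th_alt' hρ hn1
  have halt2 : CFaux.th ρ n * CFaux.th ρ (n+1) < 0 := CFaux.th_alt hρ n
  have hθm_ne : CFaux.th ρ (n-1) ≠ 0 := CFaux.th_ne hρ (n-1)
  have hθn_ne : CFaux.th ρ n ≠ 0 := CFaux.th_ne hρ n
  have hθm_lt1 : |CFaux.th ρ (n-1)| < 1 := CFaux.th_lt_one hρ (n-1)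
  have hθn_lt1 : |CFaux.th ρ n| < 1 := CFaux.th_lt_one hρ n
  have hQN1 : 1 ≤ cfQ ρ n := CFaux.cfQ_pos hρ n
  have hQm1 : 1 ≤ cfQ ρ (n-1) := CFaux.cfQ_pos hρ (n-1)
  set a : ℕ := cfA ρ (n+1) with had
  set QN : ℕ := cfQ ρ n with hQNd
  set Q1 : ℕ := cfQ ρ (n+1) with hQ1d
  set Qm : ℕ := cfQ ρ (n-1) with hQmd
  set PN : ℤ := cfP ρ n with hPNd
  set Pm : ℤ := cfP ρ (n-1) with hPmd
  set tm : ℝ := CFaux.th ρ (n-1) with htmd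
  set tn : ℝ := CFaux.th ρ n with htnd
  set t1 : ℝ := CFaux.th ρ (n+1) with ht1d
  have hA2 : 2 ≤ a := le_trans (by omega) hAa
  have htm : tm = (Qm:ℝ) * ρ - (Pm:ℝ) := by rw [htmd, hQmd, hPmd]; rfl
  have htn : tn = (QN:ℝ) * ρ - (PN:ℝ) := by rw [htnd, hQNd, hPNd]; rfl
  -- orbit points and coordinates
  set P0 : ℝ := (f ^ k) p with hP0d
  set w : ℕ → ℝ := fun j => (f ^ (k + (Qm + j * QN))) p - ((Pm + (j:ℤ) * PN : ℤ) : ℝ) with hwd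
  set Z : ℕ → ℝ := fun j => tm + (j:ℝ) * tn with hZd
  have KEY : ∀ (i i' : ℕ) (b b' : ℤ),
      ((f ^ i) p - (b:ℝ) < (f ^ i') p - (b':ℝ)) ↔ ((i:ℝ) * ρ - b < (i':ℝ) * ρ - b') :=
    fun i i' b b' => CDaux.cmp_lt hρ i i' b b' p
  have hcw : ∀ j : ℕ, ((k + (Qm + j * QN) : ℕ) : ℝ) * ρ - ((Pm + (j:ℤ) * PN : ℤ) : ℝ)
      = (k:ℝ) * ρ + Z j := by
    intro j
    simp only [hZd]
    rw [htm, htn]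
    push_cast
    ring
  have hZrec : Z a = t1 := by
    simp only [hZd]
    have hcast : ((a:ℕ):ℝ) * tn = (a:ℝ) * tn := rfl
    linarith [hθrec]
  -- the fundamental interval Δ = Δ_{n-1}^k
  have hDlen : dynLen f p (n-1) k = |w 0 - P0| := by
    rw [MORE.dynLen_eq]
    congr 1
    simp only [hwd, hP0d]
    push_cast
    ring_nf
    rw [← hρd, ← hQmd, ← hPmd]
    ring
  have hDarc : dynArc f p (n-1) k = Set.uIcc P0 (w 0) := by
    rw [MORE.dynArc_eq hcont p (n-1) k]
    congr 1
    simp only [hwd]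
    push_cast
    ring_nf
    rw [← hρd, ← hQmd, ← hPmd]
  have hΔabs : |w 0 - P0| < 1 := by
    have hidx0 : k + (Qm + 0 * QN) = Qm + k := by ring
    have hw0v : w 0 = (f ^ Qm) P0 - (Pm:ℝ) := by
      simp only [hwd]
      rw [hidx0, CDaux.pow_apply_add Qm k p, hP0d]
      push_cast
      ring
    have h1 : (f ^ Qm) P0 < P0 + ((Pm + 1 : ℤ):ℝ) ↔ (Qm:ℝ) * ρ < ((Pm + 1 : ℤ):ℝ) :=
      CDaux.ordLT hρ Qm (Pm+1) P0
    have h2 : P0 + ((Pm - 1 : ℤ):ℝ) < (f ^ Qm) P0 ↔ ((Pm - 1 : ℤ):ℝ) < (Qm:ℝ) * ρ :=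
      CDaux.ordGT hρ Qm (Pm-1) P0
    have habs := abs_lt.1 hθm_lt1
    rw [htm] at habs
    have h3 : (f ^ Qm) P0 < P0 + ((Pm + 1 : ℤ):ℝ) := h1.2 (by push_cast; linarith [habs.2])
    have h4 : P0 + ((Pm - 1 : ℤ):ℝ) < (f ^ Qm) P0 := h2.2 (by push_cast; linarith [habs.1])
    rw [abs_lt, hw0v]
    push_cast at h3 h4 ⊢
    constructor <;> linarith
  -- the long arc from `hlong`
  obtain ⟨l', hl'Q, hl'sub, hl'len⟩ := hN₀ n (le_trans (le_max_left N₀ 1) hn) k hk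
  set e1 : ℝ := (f ^ l') p with he1d
  set e2 : ℝ := (f ^ (l' + QN)) p - (PN:ℝ) with he2d
  have hLarc : dynArc f p n l' = Set.uIcc e1 e2 := MORE.dynArc_eq hcont p n l'
  have hLlen : dynLen f p n l' = |e2 - e1| := by
    rw [MORE.dynLen_eq, he2d, he1d]
  have hLabs : |e2 - e1| < 1 := by
    have hsplit : (f ^ (l' + QN)) p = (f ^ QN) e1 := by
      have hidx1 : l' + QN = QN + l' := by ring
      rw [he1d, hidx1, CDaux.pow_apply_add QN l' p]
    have h1 : (f ^ QN) e1 < e1 + ((PN + 1 : ℤ):ℝ) ↔ (QN:ℝ) * ρ < ((PN + 1 : ℤ):ℝ) :=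
      CDaux.ordLT hρ QN (PN+1) e1
    have h2 : e1 + ((PN - 1 : ℤ):ℝ) < (f ^ QN) e1 ↔ ((PN - 1 : ℤ):ℝ) < (QN:ℝ) * ρ :=
      CDaux.ordGT hρ QN (PN-1) e1
    have habs := abs_lt.1 hθn_lt1
    rw [htn] at habs
    have h3 := h1.2 (by push_cast; linarith [habs.2])
    have h4 := h2.2 (by push_cast; linarith [habs.1])
    rw [abs_lt, he2d, hsplit]
    push_cast at h3 h4 ⊢
    constructor <;> linarith
  -- the index family and its cardinality
  classical
  set S : Finset ℕ := (Finset.Icc 1 a).filter (fun j => k + (Qm + (j-1) * QN) ≠ l') with hSd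
  have hSmem : ∀ j ∈ S, 1 ≤ j ∧ j ≤ a := by
    intro j hj
    rw [hSd, Finset.mem_filter, Finset.mem_Icc] at hj
    exact hj.1
  have hSne : ∀ j ∈ S, k + (Qm + (j-1) * QN) ≠ l' := by
    intro j hj
    rw [hSd, Finset.mem_filter] at hj
    exact hj.2
  have hScard : a - 1 ≤ S.card := by
    have hsplitc := Finset.card_filter_add_card_filter_not
      (s := Finset.Icc 1 a) (p := fun j => k + (Qm + (j-1) * QN) ≠ l')
    have hTcard : ((Finset.Icc 1 a).filter
        (fun j => ¬ (k + (Qm + (j-1) * QN) ≠ l'))).card ≤ 1 := by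
      apply Finset.card_le_one.2
      intro x hx y hy
      simp only [Finset.mem_filter, Finset.mem_Icc, not_not] at hx hy
      have hx2 := hx.2
      have hy2 := hy.2
      have hxy : (x-1) * QN = (y-1) * QN := by omega
      have := Nat.eq_of_mul_eq_mul_right (by omega : 0 < QN) hxy
      omega
    have hIcc_card : (Finset.Icc 1 a).card = a := by
      rw [Nat.card_Icc]
      omega
    rw [hSd]
    omega
  have hlj_lt : ∀ j : ℕ, 1 ≤ j → j ≤ a → k + (Qm + (j-1) * QN) < Q1 := by
    intro j h1 h2
    have hmul : (j-1) * QN ≤ (a-1) * QN := Nat.mul_le_mul_right _ (by omega)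
    have hmul2 : (a-1) * QN + QN = a * QN := by
      have h3 : a - 1 + 1 = a := by omega
      calc (a-1) * QN + QN = (a-1+1) * QN := by ring
        _ = a * QN := by rw [h3]
    omega
  -- best-approximation contradiction helper
  have hBAC : ∀ (j : ℕ) (s : ℤ), 1 ≤ j → j ≤ a → k + (Qm + (j-1) * QN) ≠ l' →
      ¬ |((l':ℝ) + (QN:ℝ)) * ρ - (PN:ℝ) + (s:ℝ) - ((k:ℝ) * ρ + Z j)| < |tn| := by
    intro j s h1 h2 hne habs
    set m : ℤ := (l' : ℤ) + QN - k - Qm - (j:ℤ) * QN with hmd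
    set bb : ℤ := PN - s - Pm - (j:ℤ) * PN with hbd
    have hX : ((l':ℝ) + (QN:ℝ)) * ρ - (PN:ℝ) + (s:ℝ) - ((k:ℝ) * ρ + Z j)
        = (m:ℝ) * ρ - (bb:ℝ) := by
      simp only [hZd, hmd, hbd]
      rw [htm, htn]
      push_cast
      ring
    have hmalt : m = (l' : ℤ) - ((k + (Qm + (j-1) * QN) : ℕ) : ℤ) := by
      rw [hmd]
      have : ((k + (Qm + (j-1) * QN) : ℕ) : ℤ) = (k:ℤ) + Qm + ((j:ℤ) - 1) * QN := by
        push_cast [Nat.cast_sub h1]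
        ring
      rw [this]
      ring
    have hm_ne : m ≠ 0 := by
      rw [hmalt]
      intro h
      apply hne
      have h5 : ((k + (Qm + (j-1) * QN) : ℕ) : ℤ) = (l' : ℤ) := by omega
      exact_mod_cast h5
    have hlj := hlj_lt j h1 h2
    have hm_ub : m < (Q1:ℤ) := by
      rw [hmalt]
      have hc1 : (l':ℤ) < (Q1:ℤ) := by exact_mod_cast hl'Q
      omega
    have hm_lb : -(Q1:ℤ) < m := by
      rw [hmalt]
      have hc2 : ((k + (Qm + (j-1) * QN) : ℕ) : ℤ) < (Q1:ℤ) := by exact_mod_cast hlj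
      have hc3 : (0:ℤ) ≤ (l':ℤ) := by positivity
      omega
    rw [hX] at habs
    rcases lt_or_gt_of_ne hm_ne with hm | hm
    · have hba := CFaux.best_approx hρ n (-m) (-bb) (by omega) (by omega)
      have heq : ((-m:ℤ):ℝ) * ρ - ((-bb:ℤ):ℝ) = -((m:ℝ) * ρ - (bb:ℝ)) := by
        push_cast
        ring
      rw [heq, abs_neg] at hba
      rw [htnd] at habs
      linarith [hba, habs]
    · have hba := CFaux.best_approx hρ n m bb (by omega) (by omega)
      rw [htnd] at habs
      linarith [hba, habs]
  -- MAIN geometric step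
  have MAIN : ∃ j₀ : ℕ, 1 ≤ j₀ ∧ j₀ ≤ a ∧
      ((a:ℝ) - 1) * |w j₀ - w (j₀-1)| ≤ (1 - r) * |w 0 - P0| ∧
      Set.uIcc (w (j₀-1)) (w j₀) ⊆ Set.uIcc P0 (w 0) ∧ 0 < |w 0 - P0| := by
    have hw_shape : ∀ j : ℕ, w j = (f ^ (k + (Qm + j * QN))) p - ((Pm + (j:ℤ) * PN : ℤ) : ℝ) := by
      intro j
      rw [hwd]
    have hP0_shape : P0 = (f ^ k) p - ((0:ℤ):ℝ) := by
      rw [hP0d]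
      norm_num
    have hwlt : ∀ i j : ℕ, (w i < w j ↔ Z i < Z j) := by
      intro i j
      rw [hw_shape i, hw_shape j, KEY, hcw i, hcw j]
      constructor <;> intro <;> linarith
    have hP0lt : ∀ j : ℕ, (P0 < w j ↔ 0 < Z j) := by
      intro j
      rw [hP0_shape, hw_shape j, KEY, hcw j]
      push_cast
      constructor <;> intro <;> linarith
    have hwltP0 : ∀ j : ℕ, (w j < P0 ↔ Z j < 0) := by
      intro j
      rw [hP0_shape, hw_shape j, KEY, hcw j]
      push_cast
      constructor <;> intro <;> linarith
    have he1_shape : e1 = (f ^ l') p - ((0:ℤ):ℝ) := by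
      rw [he1d]
      norm_num
    have he2lt1 : (e2 < e1 ↔ tn < 0) := by
      rw [he1_shape, he2d, KEY]
      push_cast
      rw [htn]
      constructor <;> intro <;> linarith
    have he1lt2 : (e1 < e2 ↔ 0 < tn) := by
      rw [he1_shape, he2d, KEY]
      push_cast
      rw [htn]
      constructor <;> intro <;> linarith
    rcases lt_or_gt_of_ne hθm_ne with hneg | hpos
    · -- tm < 0 : increasing chain below P0
      have hθn : 0 < tn := by nlinarith
      have hθ1 : t1 < 0 := by nlinarith
      have hZneg : ∀ j : ℕ, j ≤ a → Z j < 0 := by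
        intro j hj
        have hja : (j:ℝ) ≤ (a:ℝ) := by exact_mod_cast hj
        have h3 : Z j = t1 - ((a:ℝ) - (j:ℝ)) * tn := by
          simp only [hZd]
          rw [← hZrec]
          simp only [hZd]
          push_cast
          ring
        nlinarith [mul_nonneg (by linarith : (0:ℝ) ≤ (a:ℝ) - (j:ℝ)) (by linarith : (0:ℝ) ≤ tn)]
      have hw_mono : ∀ i j : ℕ, i < j → j ≤ a → w i < w j := by
        intro i j hij hja
        rw [hwlt]
        simp only [hZd]
        have : (i:ℝ) < (j:ℝ) := by exact_mod_cast hij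
        nlinarith
      have hP0w : ∀ j : ℕ, j ≤ a → w j < P0 := by
        intro j hj
        rw [hwltP0]
        exact hZneg j hj
      have hw00 : w 0 < P0 := hP0w 0 (by omega)
      have hort : Set.uIcc P0 (w 0) = Set.Icc (w 0) P0 := Set.uIcc_of_ge hw00.le
      have he12 : e1 < e2 := he1lt2.2 hθn
      have hΔ2 : P0 - w 0 < 1 := by
        have := abs_lt.1 hΔabs
        linarith [this.1]
      have hL2 : e2 - e1 < 1 := by
        have := abs_lt.1 hLabs
        linarith [this.2]
      have hsub2 : circProj '' Set.Icc e1 e2 ⊆ circProj '' Set.Icc (w 0) P0 := by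
        have h := hl'sub
        rw [arcSubset, hLarc, hDarc, hort, Set.uIcc_of_le he12.le] at h
        exact h
      obtain ⟨t, ht⟩ := GEOaux.wrap hw00.le hΔ2 he12.le (by linarith) hsub2
      set α : ℝ := e1 + (t:ℝ) with hαd
      set β : ℝ := e2 + (t:ℝ) with hβd
      have hα1 : w 0 ≤ α := by rw [hαd]; exact (ht e1 ⟨le_refl _, he12.le⟩).1
      have hα2 : α ≤ P0 := by rw [hαd]; exact (ht e1 ⟨le_refl _, he12.le⟩).2
      have hβ1 : w 0 ≤ β := by rw [hβd]; exact (ht e2 ⟨he12.le, le_refl _⟩).1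
      have hβ2 : β ≤ P0 := by rw [hβd]; exact (ht e2 ⟨he12.le, le_refl _⟩).2
      have hαβ : α < β := by
        rw [hαd, hβd]
        linarith
      have hβα : β - α = dynLen f p n l' := by
        rw [hLlen, abs_of_nonneg (by linarith : (0:ℝ) ≤ e2 - e1), hαd, hβd]
        ring
      have hrlen : r * (P0 - w 0) ≤ β - α := by
        rw [hβα]
        have h := hl'len
        rw [hDlen, abs_of_nonpos (by linarith : w 0 - P0 ≤ 0)] at h
        calc r * (P0 - w 0) = r * -(w 0 - P0) := by ring
          _ ≤ dynLen f p n l' := h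
      have hdisj : ∀ j ∈ S, w j ≤ α ∨ β ≤ w (j-1) := by
        intro j hj
        obtain ⟨hj1, hja⟩ := hSmem j hj
        have hjne := hSne j hj
        by_contra hcon
        push_neg at hcon
        obtain ⟨hc1, hc2⟩ := hcon
        -- hc1 : α < w j, hc2 : w (j-1) < β
        have hc1' : (l':ℝ) * ρ + (t:ℝ) < (k:ℝ) * ρ + Z j := by
          have h : e1 + (t:ℝ) < w j := hc1
          have he : e1 + (t:ℝ) = (f ^ l') p - ((-t:ℤ):ℝ) := by
            rw [he1d]
            push_cast
            ring
          rw [he, hw_shape j, KEY, hcw j] at h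
          push_cast at h
          linarith
        have hc2' : (k:ℝ) * ρ + Z (j-1) < ((l':ℝ) + (QN:ℝ)) * ρ - (PN:ℝ) + (t:ℝ) := by
          have h : w (j-1) < e2 + (t:ℝ) := hc2
          have he : e2 + (t:ℝ) = (f ^ (l' + QN)) p - ((PN - t:ℤ):ℝ) := by
            rw [he2d]
            push_cast
            ring
          rw [he, hw_shape (j-1), KEY, hcw (j-1)] at h
          push_cast at h
          linarith
        have hZj1 : Z (j-1) = Z j - tn := by
          simp only [hZd]
          have hx : ((j-1:ℕ):ℝ) = (j:ℝ) - 1 := by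
            push_cast [Nat.cast_sub hj1]
            ring
          rw [hx]
          ring
        have habs : |((l':ℝ) + (QN:ℝ)) * ρ - (PN:ℝ) + (t:ℝ) - ((k:ℝ) * ρ + Z j)| < |tn| := by
          rw [abs_lt, abs_of_pos hθn]
          constructor
          · linarith [hc2', hZj1]
          · rw [htn]
            push_cast
            linarith [hc1']
        exact hBAC j t hj1 hja hjne habs
      -- apply core with reflected data
      obtain ⟨j₀, hj₀S, hcore⟩ := GEOaux.core a hA2 (fun j => -w j) (-P0) (-β) (-α) S
        (by
          intro i j hij hja
          show -w j < -w i
          have := hw_mono i j hij hja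
          linarith)
        (by
          show -P0 < -w a
          have := hP0w a (le_refl a)
          linarith)
        (by linarith)
        (by linarith)
        (by
          show -α ≤ -w 0
          linarith)
        hSmem hScard
        (by
          intro j hj
          rcases hdisj j hj with h | h
          · left
            show -α ≤ -w j
            linarith
          · right
            show -w (j-1) ≤ -β
            linarith)
      obtain ⟨hj₀1, hj₀a⟩ := hSmem j₀ hj₀S
      have hcore' : ((a:ℝ) - 1) * (-w (j₀-1) - -w j₀) ≤ (-w 0 - -P0) - (-α - -β) := hcore
      refine ⟨j₀, hj₀1, hj₀a, ?_, ?_, ?_⟩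
      · have hmono := hw_mono (j₀-1) j₀ (by omega) hj₀a
        rw [abs_of_nonneg (by linarith : (0:ℝ) ≤ w j₀ - w (j₀-1)),
          abs_of_nonpos (by linarith : w 0 - P0 ≤ 0)]
        have h2 : ((a:ℝ) - 1) * (w j₀ - w (j₀-1)) ≤ (P0 - w 0) - (β - α) := by
          calc ((a:ℝ) - 1) * (w j₀ - w (j₀-1)) = ((a:ℝ) - 1) * (-w (j₀-1) - -w j₀) := by ring
            _ ≤ (-w 0 - -P0) - (-α - -β) := hcore'
            _ = (P0 - w 0) - (β - α) := by ring
        have h3 : r * (P0 - w 0) ≤ β - α := hrlen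
        calc ((a:ℝ) - 1) * (w j₀ - w (j₀-1)) ≤ (P0 - w 0) - (β - α) := h2
          _ ≤ (P0 - w 0) - r * (P0 - w 0) := by linarith
          _ = (1 - r) * -(w 0 - P0) := by ring
      · rw [hort]
        intro z hz
        rw [Set.mem_uIcc] at hz
        have hwj0 : w j₀ < P0 := hP0w j₀ hj₀a
        have hwj0' : w (j₀-1) < P0 := hP0w (j₀-1) (by omega)
        have hwj00 : w 0 ≤ w j₀ := (hw_mono 0 j₀ (by omega) hj₀a).le
        have hwj1ge : w 0 ≤ w (j₀-1) := by
          rcases Nat.eq_zero_or_pos (j₀ - 1) with h | h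
          · rw [h]
          · exact (hw_mono 0 (j₀-1) h (by omega)).le
        constructor
        · rcases hz with h | h <;> linarith [h.1, h.2]
        · rcases hz with h | h <;> linarith [h.1, h.2]
      · rw [abs_of_nonpos (by linarith : w 0 - P0 ≤ 0)]
        linarith
    · -- 0 < tm : decreasing chain above P0
      have hθn : tn < 0 := by nlinarith
      have hθ1 : 0 < t1 := by nlinarith
      have hZpos : ∀ j : ℕ, j ≤ a → 0 < Z j := by
        intro j hj
        have hja : (j:ℝ) ≤ (a:ℝ) := by exact_mod_cast hj
        have h3 : Z j = t1 + ((a:ℝ) - (j:ℝ)) * (-tn) := by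
          simp only [hZd]
          rw [← hZrec]
          simp only [hZd]
          push_cast
          ring
        nlinarith [mul_nonneg (by linarith : (0:ℝ) ≤ (a:ℝ) - (j:ℝ)) (by linarith : (0:ℝ) ≤ -tn)]
      have hw_mono : ∀ i j : ℕ, i < j → j ≤ a → w j < w i := by
        intro i j hij hja
        rw [hwlt]
        simp only [hZd]
        have : (i:ℝ) < (j:ℝ) := by exact_mod_cast hij
        nlinarith
      have hP0w : ∀ j : ℕ, j ≤ a → P0 < w j := by
        intro j hj
        rw [hP0lt]
        exact hZpos j hj
      have hw00 : P0 < w 0 := hP0w 0 (by omega)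
      have hort : Set.uIcc P0 (w 0) = Set.Icc P0 (w 0) := Set.uIcc_of_le hw00.le
      have he21 : e2 < e1 := he2lt1.2 hθn
      have hΔ2 : w 0 - P0 < 1 := by
        have := abs_lt.1 hΔabs
        linarith [this.2]
      have hL2 : e1 - e2 < 1 := by
        have := abs_lt.1 hLabs
        linarith [this.1]
      have hsub2 : circProj '' Set.Icc e2 e1 ⊆ circProj '' Set.Icc P0 (w 0) := by
        have h := hl'sub
        rw [arcSubset, hLarc, hDarc, hort, Set.uIcc_of_ge he21.le] at h
        exact h
      obtain ⟨t, ht⟩ := GEOaux.wrap hw00.le hΔ2 he21.le (by linarith) hsub2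
      set α : ℝ := e2 + (t:ℝ) with hαd
      set β : ℝ := e1 + (t:ℝ) with hβd
      have hα1 : P0 ≤ α := by rw [hαd]; exact (ht e2 ⟨le_refl _, he21.le⟩).1
      have hα2 : α ≤ w 0 := by rw [hαd]; exact (ht e2 ⟨le_refl _, he21.le⟩).2
      have hβ1 : P0 ≤ β := by rw [hβd]; exact (ht e1 ⟨he21.le, le_refl _⟩).1
      have hβ2 : β ≤ w 0 := by rw [hβd]; exact (ht e1 ⟨he21.le, le_refl _⟩).2
      have hαβ : α < β := by
        rw [hαd, hβd]
        linarith
      have hβα : β - α = dynLen f p n l' := by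
        rw [hLlen, abs_of_nonpos (by linarith : e2 - e1 ≤ 0), hαd, hβd]
        ring
      have hrlen : r * (w 0 - P0) ≤ β - α := by
        rw [hβα]
        have h := hl'len
        rw [hDlen, abs_of_nonneg (by linarith : (0:ℝ) ≤ w 0 - P0)] at h
        exact h
      have hdisj : ∀ j ∈ S, β ≤ w j ∨ w (j-1) ≤ α := by
        intro j hj
        obtain ⟨hj1, hja⟩ := hSmem j hj
        have hjne := hSne j hj
        by_contra hcon
        push_neg at hcon
        obtain ⟨hc1, hc2⟩ := hcon
        -- hc1 : w j < β, hc2 : α < w (j-1)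
        have hc1' : (k:ℝ) * ρ + Z j < (l':ℝ) * ρ + (t:ℝ) := by
          have h : w j < e1 + (t:ℝ) := hc1
          have he : e1 + (t:ℝ) = (f ^ l') p - ((-t:ℤ):ℝ) := by
            rw [he1d]
            push_cast
            ring
          rw [he, hw_shape j, KEY, hcw j] at h
          push_cast at h
          linarith
        have hc2' : ((l':ℝ) + (QN:ℝ)) * ρ - (PN:ℝ) + (t:ℝ) < (k:ℝ) * ρ + Z (j-1) := by
          have h : e2 + (t:ℝ) < w (j-1) := hc2
          have he : e2 + (t:ℝ) = (f ^ (l' + QN)) p - ((PN - t:ℤ):ℝ) := by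
            rw [he2d]
            push_cast
            ring
          rw [he, hw_shape (j-1), KEY, hcw (j-1)] at h
          push_cast at h
          linarith
        have hZj1 : Z (j-1) = Z j - tn := by
          simp only [hZd]
          have hx : ((j-1:ℕ):ℝ) = (j:ℝ) - 1 := by
            push_cast [Nat.cast_sub hj1]
            ring
          rw [hx]
          ring
        have habs : |((l':ℝ) + (QN:ℝ)) * ρ - (PN:ℝ) + (t:ℝ) - ((k:ℝ) * ρ + Z j)| < |tn| := by
          rw [abs_lt, abs_of_neg hθn]
          constructor
          · rw [htn]
            push_cast
            linarith [hc1']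
          · linarith [hc2', hZj1]
        exact hBAC j t hj1 hja hjne habs
      obtain ⟨j₀, hj₀S, hcore⟩ := GEOaux.core a hA2 w P0 α β S hw_mono
        (hP0w a (le_refl a)) hα1 hαβ hβ2 hSmem hScard hdisj
      obtain ⟨hj₀1, hj₀a⟩ := hSmem j₀ hj₀S
      refine ⟨j₀, hj₀1, hj₀a, ?_, ?_, ?_⟩
      · have hmono := hw_mono (j₀-1) j₀ (by omega) hj₀a
        rw [abs_of_nonpos (by linarith : w j₀ - w (j₀-1) ≤ 0),
          abs_of_nonneg (by linarith : (0:ℝ) ≤ w 0 - P0)]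
        have h3 : r * (w 0 - P0) ≤ β - α := hrlen
        calc ((a:ℝ) - 1) * -(w j₀ - w (j₀-1))
            = ((a:ℝ) - 1) * (w (j₀-1) - w j₀) := by ring
          _ ≤ (w 0 - P0) - (β - α) := hcore
          _ ≤ (w 0 - P0) - r * (w 0 - P0) := by linarith
          _ = (1 - r) * (w 0 - P0) := by ring
      · rw [hort]
        intro z hz
        rw [Set.mem_uIcc] at hz
        have hwj0 : P0 < w j₀ := hP0w j₀ hj₀a
        have hwj0' : P0 < w (j₀-1) := hP0w (j₀-1) (by omega)
        have hwj00 : w j₀ ≤ w 0 := (hw_mono 0 j₀ (by omega) hj₀a).le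
        have hwj1le : w (j₀-1) ≤ w 0 := by
          rcases Nat.eq_zero_or_pos (j₀ - 1) with h | h
          · rw [h]
          · exact (hw_mono 0 (j₀-1) h (by omega)).le
        constructor
        · rcases hz with h | h <;> linarith [h.1, h.2]
        · rcases hz with h | h <;> linarith [h.1, h.2]
      · rw [abs_of_nonneg (by linarith : (0:ℝ) ≤ w 0 - P0)]
        linarith
  -- conclusion
  obtain ⟨j₀, hj₀1, hj₀a, hlenb, hsubIcc, hΔpos⟩ := MAIN
  have hidx : k + (Qm + (j₀-1) * QN) + QN = k + (Qm + j₀ * QN) := by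
    have h4 : (j₀ - 1) * QN + QN = j₀ * QN := by
      have h3 : j₀ - 1 + 1 = j₀ := by omega
      calc (j₀-1)*QN + QN = (j₀-1+1)*QN := by ring
        _ = j₀ * QN := by rw [h3]
    omega
  set c : ℤ := Pm + ((j₀ - 1 : ℕ):ℤ) * PN with hcd
  have he1' : (f ^ (k + (Qm + (j₀-1) * QN))) p = w (j₀-1) + (c:ℝ) := by
    rw [hwd]
    simp only [hcd]
    push_cast
    ring
  have he2' : (f ^ (k + (Qm + (j₀-1) * QN) + QN)) p - (PN:ℝ) = w j₀ + (c:ℝ) := by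
    rw [hidx, hwd]
    simp only [hcd]
    have hx : ((j₀-1:ℕ):ℤ) = (j₀:ℤ) - 1 := by omega
    rw [hx]
    push_cast
    ring
  refine ⟨k + (Qm + (j₀-1) * QN), hlj_lt j₀ hj₀1 hj₀a, ?_, ?_⟩
  · rw [arcSubset, MORE.dynArc_eq hcont p n _, hDarc]
    rw [he1', he2']
    rintro z ⟨x, hx, rfl⟩
    have hx2 : x - (c:ℝ) ∈ Set.uIcc (w (j₀-1)) (w j₀) := by
      rw [Set.mem_uIcc] at hx ⊢
      rcases hx with h | h
      · left
        constructor <;> linarith [h.1, h.2]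
      · right
        constructor <;> linarith [h.1, h.2]
    refine ⟨x - (c:ℝ), hsubIcc hx2, ?_⟩
    have hxc : (x - (c:ℝ)) + (c:ℝ) = x := by ring
    exact ((GEOaux.circProj_add_int (x - (c:ℝ)) c).symm).trans (by rw [hxc])
  · have hlen_l : dynLen f p n (k + (Qm + (j₀-1) * QN)) = |w j₀ - w (j₀-1)| := by
      rw [MORE.dynLen_eq]
      have hinner : (f ^ (k + (Qm + (j₀-1) * QN) + QN)) p - (PN:ℝ)
          - (f ^ (k + (Qm + (j₀-1) * QN))) p = w j₀ - w (j₀-1) := by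
        rw [he2', he1']
        ring
      rw [hinner]
    rw [hlen_l, hDlen]
    have hmu : cfMu ρ n / cfMu ρ (n-1) = gaussIter ρ n := by
      rw [CFaux.cfMu_eq, CFaux.cfMu_eq, ← htnd, ← htmd]
      rw [htnd, htmd, MORE.abs_th_succ' hρ hn1]
      exact mul_div_cancel_left₀ _ (ne_of_gt (CFaux.th_pos_abs hρ (n-1)))
    rw [hmu]
    have hXgt : 1 / ((a:ℝ) + 1) < gaussIter ρ n := CFaux.gauss_gt hρ n
    have hXpos : 0 < gaussIter ρ n := (CFaux.gauss_pos hρ n).1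
    have haR2 : (2:ℝ) ≤ (a:ℝ) := by exact_mod_cast hA2
    have hceil2 : (γ + 1) / (γ - (1 - r)) + 2 ≤ (a:ℝ) := by
      have hacast : (⌈(γ + 1) / (γ - (1 - r))⌉₊ : ℝ) + 2 ≤ (a:ℝ) := by exact_mod_cast hAa
      linarith [Nat.le_ceil ((γ + 1) / (γ - (1 - r)))]
    rw [div_le_iff₀ hΔpos]
    exact MORE.numeric_final hr0 hr1 hγ haR2 hceil2 hlenb hΔpos (abs_nonneg _) hXpos hXgt


end
end
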